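/- arXiv:1912.00453 — 2 statements merged into one kernel-verified Lean document; each statement's English description precedes it below -/
import Mathlib

section
/- In the generic band situation, for every 1 ≤ t ≤ k−1 the coefficient c_t ∈ R (defined by det(λY + μX) = λ^{n−k} Σ_{i=0}^{k} c_i μ^i λ^{k−i}) is an irreducible element of the polynomial ring R. -/
open Matrix Finset

noncomputable section

/-- The determinant of the minor of the `ℕ`-indexed (0-based) matrix `Φ` on the 1-based
row/column range `[i, M]`; for `i = M + 1` this is the determinant of the empty matrix, `1`. -/
def sminor {α : Type*} [CommRing α] (Φ : ℕ → ℕ → α) (i M : ℕ) : α :=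
  (Matrix.of fun r c : Fin (M + 1 - i) => Φ (i - 1 + (r : ℕ)) (i - 1 + (c : ℕ))).det

/-- Package an `ℕ`-indexed (0-based) family of entries as an `n × n` matrix. -/
def toSq {α : Type*} (n : ℕ) (f : ℕ → ℕ → α) : Matrix (Fin n) (Fin n) α :=
  Matrix.of fun i j => f (i : ℕ) (j : ℕ)

/-- The core `Φ` of a staircase pair `(X, Y)` of `n × n` matrices with parameters
`a = k + b`; it is an `N × N` matrix, `N = (k-1)*n + b`, given here as a (0-based)
`ℕ`-indexed family of entries.  For `1 ≤ j ≤ k-1` (1-based), the block rows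
`(j-1)(n-1)+1 .. j(n-1)` carry `Y_{[2,n]}` in columns `(j-1)n+1 .. jn` and (for `j ≥ 2`)
`X_{[2,n]}` in columns `(j-2)n+1 .. (j-1)n`; the last `a - 1` rows carry `X_{[2,a]}` in
columns `(k-2)n+1 .. (k-1)n` and `Y_{[2,a]}^{[1,b]}` in columns `(k-1)n+1 .. N`. -/
def stairCore {α : Type*} [Zero α] (n k : ℕ) (Xf Yf : ℕ → ℕ → α) : ℕ → ℕ → α := fun r c =>
  if r < (k - 1) * (n - 1) then
    if r / (n - 1) * n ≤ c ∧ c < r / (n - 1) * n + n then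
      Yf (r % (n - 1) + 1) (c - r / (n - 1) * n)
    else if 1 ≤ r / (n - 1) ∧ (r / (n - 1) - 1) * n ≤ c ∧ c < r / (n - 1) * n then
      Xf (r % (n - 1) + 1) (c - (r / (n - 1) - 1) * n)
    else 0
  else
    if (k - 2) * n ≤ c ∧ c < (k - 1) * n then
      Xf (r - (k - 1) * (n - 1) + 1) (c - (k - 2) * n)
    else if (k - 1) * n ≤ c then
      Yf (r - (k - 1) * (n - 1) + 1) (c - (k - 1) * n)
    else 0

/-- `det Ȳ`: determinant of the submatrix of `Y` on rows and columns `2..n` (1-based). -/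
def detYbar {α : Type*} [CommRing α] (n : ℕ) (Yf : ℕ → ℕ → α) : α :=
  (Matrix.of fun i j : Fin (n - 1) => Yf ((i : ℕ) + 1) ((j : ℕ) + 1)).det

/-- Determinant of the minor of `Y` on rows `{1, 3, 4, …, n}` and columns `{2, …, n}`
(1-based). -/
def detYgamma {α : Type*} [CommRing α] (n : ℕ) (Yf : ℕ → ℕ → α) : α :=
  (Matrix.of fun i j : Fin (n - 1) =>
    Yf (if (i : ℕ) = 0 then 0 else (i : ℕ) + 1) ((j : ℕ) + 1)).det

/-- `det (λ Y + μ X)` as a polynomial in the two variables `λ = X 0`, `μ = X 1`. -/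
def detLM {α : Type*} [CommRing α] (n : ℕ) (Xf Yf : ℕ → ℕ → α) :
    MvPolynomial (Fin 2) α :=
  Matrix.det
    (((MvPolynomial.X 0 : MvPolynomial (Fin 2) α) • (toSq n Yf).map (fun p => MvPolynomial.C p)
      + (MvPolynomial.X 1 : MvPolynomial (Fin 2) α) • (toSq n Xf).map (fun p => MvPolynomial.C p)
      : Matrix (Fin n) (Fin n) (MvPolynomial (Fin 2) α)))

/-- The block `Y2`: submatrix of `Y` on rows `k+1 .. k+b` and columns `1 .. b` (1-based). -/
def blockY2 (n k b : ℕ) (h : k + b ≤ n) (Y : Matrix (Fin n) (Fin n) ℂ) :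
    Matrix (Fin b) (Fin b) ℂ :=
  Matrix.of fun i j => Y ⟨k + (i : ℕ), by have := i.isLt; omega⟩ (Fin.castLE (by omega) j)

/-- The `k × k` matrix `U = W11 - Y1 Y2⁻¹ W21` attached to a staircase pair `(X, Y)`,
where `[[W11, W12], [W21, W22]]` is the `a × a` leading block of `X Y⁻¹` (`W11` of size
`k × k`) and `[Y1; Y2]` is the submatrix of `Y` on rows `1..a`, columns `1..b`. -/
def blockU (n k b : ℕ) (h : k + b ≤ n) (X Y : Matrix (Fin n) (Fin n) ℂ) :
    Matrix (Fin k) (Fin k) ℂ :=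
  (Matrix.of fun i j : Fin k =>
      (X * Y⁻¹) (Fin.castLE (by omega) i) (Fin.castLE (by omega) j))
    - (Matrix.of fun (i : Fin k) (j : Fin b) =>
          Y (Fin.castLE (by omega) i) (Fin.castLE (by omega) j))
      * (blockY2 n k b h Y)⁻¹
      * (Matrix.of fun (i : Fin b) (j : Fin k) =>
          (X * Y⁻¹) ⟨k + (i : ℕ), by have := i.isLt; omega⟩ (Fin.castLE (by omega) j))

/-- The standard basis vector `e_{m+1}` (so `basisVec k 0 = e_1`, `basisVec k 1 = e_2`). -/
def basisVec (k m : ℕ) : Fin k → ℂ := fun i => if (i : ℕ) = m then 1 else 0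

/-- The vector `v_γ = U (e_2 + γ e_1)`, with `γ` the ratio of the minor of `Y` on rows
`{1,3,…,n}`, columns `{2,…,n}` by `det Ȳ`. -/
def vGamma (n k b : ℕ) (h : k + b ≤ n) (X Y : ℕ → ℕ → ℂ) : Fin k → ℂ :=
  (blockU n k b h (toSq n X) (toSq n Y)).mulVec
    (basisVec k 1 + (detYgamma n Y / detYbar n Y) • basisVec k 0)

/-- The coefficient ring for the generic staircase pair: polynomials over `ℂ` in the
variables `x_{ij}` (tagged `true`) and `y_{ij}` (tagged `false`). -/
abbrev Rgen : Type := MvPolynomial (Bool × ℕ × ℕ) ℂ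

/-- The generic staircase matrix `X` (0-based): `x_{ij}` for `i < a`, `b ≤ j < n`, else `0`. -/
def genX (n a b : ℕ) : ℕ → ℕ → Rgen := fun i j =>
  if i < a ∧ b ≤ j ∧ j < n then MvPolynomial.X (true, i, j) else 0

/-- The generic staircase matrix `Y` (0-based): `y_{ij}` except in the zero block
(`i ≥ a`, `j < b`). -/
def genY (n a b : ℕ) : ℕ → ℕ → Rgen := fun i j =>
  if i < n ∧ j < n ∧ ¬(a ≤ i ∧ j < b) then MvPolynomial.X (false, i, j) else 0

/-- The coefficient ring for the generic band pair: polynomials over `ℂ` in variables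
`a_{ij}`. -/
abbrev Rband : Type := MvPolynomial (ℕ × ℕ) ℂ

/-- The generic band entries `a_{ij}` (1-based). -/
def genA : ℕ → ℕ → Rband := fun i j => MvPolynomial.X (i, j)

/-- The band matrix `X` (0-based indices) built from the entries `a_{ij}` (1-based):
`X_{i, n-k+i-1+s} = a_{s,i}` for `1 ≤ i ≤ k`, `1 ≤ s ≤ k+1-i` (1-based). -/
def bandX {α : Type*} [Zero α] (n k : ℕ) (a : ℕ → ℕ → α) : ℕ → ℕ → α := fun i j =>
  if i < k ∧ n - k + i ≤ j ∧ j < n then a (j + k + 1 - n - i) (i + 1) else 0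

/-- The band matrix `Y` (0-based indices) built from the entries `a_{ij}` (1-based):
`Y_{ij} = a_{k+1-i+j, i}` for `max(1, i-k) ≤ j ≤ i` (1-based), `0` otherwise. -/
def bandY {α : Type*} [Zero α] (n k : ℕ) (a : ℕ → ℕ → α) : ℕ → ℕ → α := fun i j =>
  if j ≤ i ∧ i ≤ j + k ∧ i < n then a (k + 1 + j - i) (i + 1) else 0

/-- Top-left `k × k` block of `X * Y⁻¹`. -/
def bandUblock (n k : ℕ) (h : k ≤ n) (Xm Ym : Matrix (Fin n) (Fin n) ℂ) :
    Matrix (Fin k) (Fin k) ℂ :=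
  Matrix.of fun i j => (Xm * Ym⁻¹) (Fin.castLE h i) (Fin.castLE h j)

/-- `K(A;u) = [u, Au, …, A^{k-1}u]`. -/
def Kmat (k : ℕ) (A : Matrix (Fin k) (Fin k) ℂ) (u : Fin k → ℂ) :
    Matrix (Fin k) (Fin k) ℂ :=
  Matrix.of fun i j => (A ^ (j : ℕ)).mulVec u i

/-- `K1(A;u,v) = [v, u, Au, …, A^{k-2}u]`. -/
def K1mat (k : ℕ) (A : Matrix (Fin k) (Fin k) ℂ) (u v : Fin k → ℂ) :
    Matrix (Fin k) (Fin k) ℂ :=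
  Matrix.of fun i j => if (j : ℕ) = 0 then v i else (A ^ ((j : ℕ) - 1)).mulVec u i

/-- `K2(A;u,v) = [Av, u, Au, …, A^{k-2}u]`. -/
def K2mat (k : ℕ) (A : Matrix (Fin k) (Fin k) ℂ) (u v : Fin k → ℂ) :
    Matrix (Fin k) (Fin k) ℂ :=
  Matrix.of fun i j => if (j : ℕ) = 0 then A.mulVec v i else (A ^ ((j : ℕ) - 1)).mulVec u i

/-- `w`: the last row of the classical adjoint of `K1(A;u,v)`. -/
def wRow (k : ℕ) (A : Matrix (Fin k) (Fin k) ℂ) (u v : Fin k → ℂ) : Fin k → ℂ :=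
  fun j => (K1mat k A u v).adjugate ⟨k - 1, by have := j.isLt; omega⟩ j

/-- `K*(A;u,v)`: the matrix with rows `w, wA, …, wA^{k-1}`. -/
def Kstar (k : ℕ) (A : Matrix (Fin k) (Fin k) ℂ) (u v : Fin k → ℂ) :
    Matrix (Fin k) (Fin k) ℂ :=
  Matrix.of fun i j => Matrix.vecMul (wRow k A u v) (A ^ (i : ℕ)) j

/-- Extend a `k × k` matrix by zero to an `ℕ`-indexed family of entries. -/
def extMat {α : Type*} [Zero α] (k : ℕ) (M : Matrix (Fin k) (Fin k) α) : ℕ → ℕ → α :=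
  fun i j => if h : i < k ∧ j < k then M ⟨i, h.1⟩ ⟨j, h.2⟩ else 0

namespace S16

open MvPolynomial Finset Equiv

/-! ### Weights -/

/-- Weight function on variables `(s, j)` depending only on the second component. -/
def wt (u : ℕ → ℕ) : ℕ × ℕ → ℕ := fun v => u v.2

/-- Indicator weight of the single group `j`. -/
def uI (j : ℕ) : ℕ → ℕ := fun x => if x = j then 1 else 0

/-- Weight counting stray variables (second component outside `[1, n]`). -/
def uO (n : ℕ) : ℕ → ℕ := fun x => if 1 ≤ x ∧ x ≤ n then 0 else 1

/-! ### Factors of weighted-homogeneous polynomials are weighted homogeneous -/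

section FH

variable {τ : Type*} {R : Type*} [CommRing R] [IsDomain R]

theorem whc_mul_sup (w : τ → ℕ) (p q : MvPolynomial τ R) (A B : ℕ)
    (hA : ∀ m, MvPolynomial.coeff m p ≠ 0 → Finsupp.weight w m ≤ A)
    (hB : ∀ m, MvPolynomial.coeff m q ≠ 0 → Finsupp.weight w m ≤ B) :
    weightedHomogeneousComponent w (A + B) (p * q) =
      weightedHomogeneousComponent w A p * weightedHomogeneousComponent w B q := by
  classical
  ext m
  rw [coeff_weightedHomogeneousComponent, MvPolynomial.coeff_mul, MvPolynomial.coeff_mul]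
  by_cases hm : Finsupp.weight w m = A + B
  · rw [if_pos hm]
    refine Finset.sum_congr rfl fun x hx => ?_
    have hx' : x.1 + x.2 = m := Finset.HasAntidiagonal.mem_antidiagonal.mp hx
    rw [coeff_weightedHomogeneousComponent, coeff_weightedHomogeneousComponent]
    rcases eq_or_ne (MvPolynomial.coeff x.1 p) 0 with h1 | h1
    · simp [h1]
    rcases eq_or_ne (MvPolynomial.coeff x.2 q) 0 with h2 | h2
    · simp [h2]
    have hw : Finsupp.weight w x.1 + Finsupp.weight w x.2 = A + B := by
      rw [← map_add, hx', hm]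
    have b1 := hA _ h1
    have b2 := hB _ h2
    rw [if_pos (by omega), if_pos (by omega)]
  · rw [if_neg hm]
    refine (Finset.sum_eq_zero fun x hx => ?_).symm
    have hx' : x.1 + x.2 = m := Finset.HasAntidiagonal.mem_antidiagonal.mp hx
    rw [coeff_weightedHomogeneousComponent, coeff_weightedHomogeneousComponent]
    split_ifs with h1 h2
    · exact (hm (by rw [← hx', map_add, h1, h2])).elim
    all_goals simp

theorem whc_mul_inf (w : τ → ℕ) (p q : MvPolynomial τ R) (A B : ℕ)
    (hA : ∀ m, MvPolynomial.coeff m p ≠ 0 → A ≤ Finsupp.weight w m)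
    (hB : ∀ m, MvPolynomial.coeff m q ≠ 0 → B ≤ Finsupp.weight w m) :
    weightedHomogeneousComponent w (A + B) (p * q) =
      weightedHomogeneousComponent w A p * weightedHomogeneousComponent w B q := by
  classical
  ext m
  rw [coeff_weightedHomogeneousComponent, MvPolynomial.coeff_mul, MvPolynomial.coeff_mul]
  by_cases hm : Finsupp.weight w m = A + B
  · rw [if_pos hm]
    refine Finset.sum_congr rfl fun x hx => ?_
    have hx' : x.1 + x.2 = m := Finset.HasAntidiagonal.mem_antidiagonal.mp hx
    rw [coeff_weightedHomogeneousComponent, coeff_weightedHomogeneousComponent]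
    rcases eq_or_ne (MvPolynomial.coeff x.1 p) 0 with h1 | h1
    · simp [h1]
    rcases eq_or_ne (MvPolynomial.coeff x.2 q) 0 with h2 | h2
    · simp [h2]
    have hw : Finsupp.weight w x.1 + Finsupp.weight w x.2 = A + B := by
      rw [← map_add, hx', hm]
    have b1 := hA _ h1
    have b2 := hB _ h2
    rw [if_pos (by omega), if_pos (by omega)]
  · rw [if_neg hm]
    refine (Finset.sum_eq_zero fun x hx => ?_).symm
    have hx' : x.1 + x.2 = m := Finset.HasAntidiagonal.mem_antidiagonal.mp hx
    rw [coeff_weightedHomogeneousComponent, coeff_weightedHomogeneousComponent]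
    split_ifs with h1 h2
    · exact (hm (by rw [← hx', map_add, h1, h2])).elim
    all_goals simp

theorem factor_whomog (w : τ → ℕ) {p q : MvPolynomial τ R} (hp : p ≠ 0) (hq : q ≠ 0) {d : ℕ}
    (h : IsWeightedHomogeneous w (p * q) d) :
    ∃ a b : ℕ, a + b = d ∧ IsWeightedHomogeneous w p a ∧ IsWeightedHomogeneous w q b := by
  classical
  have hps : p.support.Nonempty := Finset.nonempty_iff_ne_empty.mpr (mt MvPolynomial.support_eq_empty.mp hp)
  have hqs : q.support.Nonempty := Finset.nonempty_iff_ne_empty.mpr (mt MvPolynomial.support_eq_empty.mp hq)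
  obtain ⟨ma, hma, hmaeq⟩ := Finset.exists_mem_eq_sup' hps (fun m => (Finsupp.weight w) m)
  obtain ⟨ma', hma', hmaeq'⟩ := Finset.exists_mem_eq_inf' hps (fun m => (Finsupp.weight w) m)
  obtain ⟨mb, hmb, hmbeq⟩ := Finset.exists_mem_eq_sup' hqs (fun m => (Finsupp.weight w) m)
  obtain ⟨mb', hmb', hmbeq'⟩ := Finset.exists_mem_eq_inf' hqs (fun m => (Finsupp.weight w) m)
  set A := p.support.sup' hps (fun m => (Finsupp.weight w) m) with hA
  set A' := p.support.inf' hps (fun m => (Finsupp.weight w) m) with hA'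
  set B := q.support.sup' hqs (fun m => (Finsupp.weight w) m) with hB
  set B' := q.support.inf' hqs (fun m => (Finsupp.weight w) m) with hB'
  have hAle : ∀ m, MvPolynomial.coeff m p ≠ 0 → Finsupp.weight w m ≤ A := fun m hm =>
    Finset.le_sup' _ (mem_support_iff.mpr hm)
  have hA'le : ∀ m, MvPolynomial.coeff m p ≠ 0 → A' ≤ Finsupp.weight w m := fun m hm =>
    Finset.inf'_le _ (mem_support_iff.mpr hm)
  have hBle : ∀ m, MvPolynomial.coeff m q ≠ 0 → Finsupp.weight w m ≤ B := fun m hm =>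
    Finset.le_sup' _ (mem_support_iff.mpr hm)
  have hB'le : ∀ m, MvPolynomial.coeff m q ≠ 0 → B' ≤ Finsupp.weight w m := fun m hm =>
    Finset.inf'_le _ (mem_support_iff.mpr hm)
  have hne : ∀ (X Y : ℕ), weightedHomogeneousComponent w X p ≠ 0 →
      weightedHomogeneousComponent w Y q ≠ 0 →
      weightedHomogeneousComponent w (X + Y) (p * q) =
        weightedHomogeneousComponent w X p * weightedHomogeneousComponent w Y q →
      X + Y = d := by
    intro X Y hX hY heq
    by_contra hXY
    have h0 : weightedHomogeneousComponent w (X + Y) (p * q) = 0 :=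
      h.weightedHomogeneousComponent_ne _ hXY
    rw [heq] at h0
    exact (mul_ne_zero hX hY) h0
  have hwA : weightedHomogeneousComponent w A p ≠ 0 := by
    intro h0
    have : MvPolynomial.coeff ma (weightedHomogeneousComponent w A p) = 0 := by rw [h0]; rfl
    rw [coeff_weightedHomogeneousComponent, if_pos hmaeq.symm] at this
    exact (mem_support_iff.mp hma) this
  have hwA' : weightedHomogeneousComponent w A' p ≠ 0 := by
    intro h0
    have : MvPolynomial.coeff ma' (weightedHomogeneousComponent w A' p) = 0 := by rw [h0]; rfl
    rw [coeff_weightedHomogeneousComponent, if_pos hmaeq'.symm] at this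
    exact (mem_support_iff.mp hma') this
  have hwB : weightedHomogeneousComponent w B q ≠ 0 := by
    intro h0
    have : MvPolynomial.coeff mb (weightedHomogeneousComponent w B q) = 0 := by rw [h0]; rfl
    rw [coeff_weightedHomogeneousComponent, if_pos hmbeq.symm] at this
    exact (mem_support_iff.mp hmb) this
  have hwB' : weightedHomogeneousComponent w B' q ≠ 0 := by
    intro h0
    have : MvPolynomial.coeff mb' (weightedHomogeneousComponent w B' q) = 0 := by rw [h0]; rfl
    rw [coeff_weightedHomogeneousComponent, if_pos hmbeq'.symm] at this
    exact (mem_support_iff.mp hmb') this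
  have h1 : A + B = d := hne A B hwA hwB (whc_mul_sup w p q A B hAle hBle)
  have h2 : A' + B' = d := hne A' B' hwA' hwB' (whc_mul_inf w p q A' B' hA'le hB'le)
  have hle1 : A' ≤ A := le_trans (Finset.inf'_le _ hma) (le_of_eq hmaeq.symm)
  have hle2 : B' ≤ B := le_trans (Finset.inf'_le _ hmb) (le_of_eq hmbeq.symm)
  have hAA : A = A' := by omega
  have hBB : B = B' := by omega
  refine ⟨A, B, h1, fun m hm => le_antisymm (hAle m hm) (hAA ▸ hA'le m hm),
    fun m hm => le_antisymm (hBle m hm) (hBB ▸ hB'le m hm)⟩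

end FH

end S16
namespace S16

open MvPolynomial Finset Equiv

/-! ### The restricted multilinear monomial exponents -/

/-- Exponent of the multilinear monomial `∏_{i ∈ P} x_{(s i, i+1)}`. -/
def mres (n : ℕ) (s : Fin n → ℕ) (P : Finset (Fin n)) : (ℕ × ℕ) →₀ ℕ :=
  ∑ i ∈ P, Finsupp.single (s i, (i : ℕ) + 1) 1

theorem mres_add_compl (n : ℕ) (s : Fin n → ℕ) (P : Finset (Fin n)) :
    mres n s P + mres n s Pᶜ = mres n s univ :=
  Finset.sum_add_sum_compl P _

theorem mres_apply_pair (n : ℕ) (s : Fin n → ℕ) (P : Finset (Fin n)) (i : Fin n) (x : ℕ) :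
    mres n s P (x, (i : ℕ) + 1) = if i ∈ P ∧ x = s i then 1 else 0 := by
  classical
  rw [mres, Finsupp.finset_sum_apply]
  have hcongr : ∀ j ∈ P, (Finsupp.single (s j, (j : ℕ) + 1) 1) (x, (i : ℕ) + 1)
      = if j = i ∧ x = s i then 1 else 0 := by
    intro j _
    rw [Finsupp.single_apply]
    congr 1
    rw [eq_iff_iff]
    constructor
    · intro hp
      have h1 : s j = x := congrArg Prod.fst hp
      have h2 : (j : ℕ) + 1 = (i : ℕ) + 1 := congrArg Prod.snd hp
      have hji : j = i := Fin.ext (by omega)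
      exact ⟨hji, by rw [← h1, hji]⟩
    · rintro ⟨rfl, rfl⟩; rfl
  rw [Finset.sum_congr rfl hcongr]
  by_cases hx : x = s i
  · simp only [hx, and_true]
    rw [Finset.sum_ite_eq' P i (fun _ => (1 : ℕ))]
  · simp [hx]

theorem mres_apply_out (n : ℕ) (s : Fin n → ℕ) (P : Finset (Fin n)) (v : ℕ × ℕ)
    (h : ∀ i : Fin n, v ≠ (s i, (i : ℕ) + 1)) : mres n s P v = 0 := by
  classical
  rw [mres, Finsupp.finset_sum_apply]
  refine Finset.sum_eq_zero fun j _ => ?_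
  rw [Finsupp.single_apply, if_neg (fun hp => h j hp.symm)]

theorem weight_mres (n : ℕ) (u : ℕ → ℕ) (s : Fin n → ℕ) (P : Finset (Fin n)) :
    Finsupp.weight (wt u) (mres n s P) = ∑ i ∈ P, u ((i : ℕ) + 1) := by
  rw [mres, map_sum]
  refine Finset.sum_congr rfl fun i _ => ?_
  rw [Finsupp.weight_apply, Finsupp.sum_single_index]
  · simp [wt]
  · simp

theorem mres_eq_iff (n : ℕ) (s s' : Fin n → ℕ)
    (h : mres n s univ = mres n s' univ) : ∀ i, s i = s' i := by
  intro i
  have h1 : mres n s univ (s i, (i : ℕ) + 1) = 1 := by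
    rw [mres_apply_pair]; simp
  rw [h, mres_apply_pair] at h1
  by_contra hne
  rw [if_neg (by simp [hne])] at h1
  exact one_ne_zero h1.symm

/-- product of distinct variables equals the monomial with `mres` exponent -/
theorem prod_X_eq (n : ℕ) (s : Fin n → ℕ) (P : Finset (Fin n)) :
    (∏ i ∈ P, (X (s i, (i : ℕ) + 1) : Rband)) = monomial (mres n s P) 1 := by
  classical
  induction P using Finset.induction_on with
  | empty => simp [mres]
  | @insert a Q ha ih =>
    have hm : mres n s (insert a Q) = Finsupp.single (s a, (a : ℕ) + 1) 1 + mres n s Q := by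
      rw [mres, mres, Finset.sum_insert ha]
    rw [Finset.prod_insert ha, ih, hm,
      show (X (s a, (a : ℕ) + 1) : Rband) = monomial (Finsupp.single (s a, (a : ℕ) + 1) 1) 1 by
        rw [← pow_one (X (s a, (a : ℕ) + 1) : Rband), X_pow_eq_monomial],
      monomial_mul, one_mul]

/-! ### The expansion terms -/

/-- The term entry for column choice: `X`-entry if wrapped (`i ∈ S`), else `Y`-entry. -/
def entryP (n k : ℕ) (σ : Equiv.Perm (Fin n)) (S : Finset (Fin n)) (i : Fin n) : Rband :=
  if i ∈ S then bandX n k genA (i : ℕ) ((σ i : ℕ)) else bandY n k genA (i : ℕ) ((σ i : ℕ))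

/-- The product over one permutation and one wrap-set. -/
def term (n k : ℕ) (σ : Equiv.Perm (Fin n)) (S : Finset (Fin n)) : Rband :=
  ∏ i : Fin n, entryP n k σ S i

theorem term_eq_prods (n k : ℕ) (σ : Equiv.Perm (Fin n)) (S : Finset (Fin n)) :
    term n k σ S = (∏ i ∈ S, bandX n k genA (i : ℕ) ((σ i : ℕ)))
      * ∏ i ∈ Sᶜ, bandY n k genA (i : ℕ) ((σ i : ℕ)) := by
  classical
  rw [term, ← Finset.prod_mul_prod_compl S (entryP n k σ S)]
  congr 1
  · exact Finset.prod_congr rfl fun i hi => by rw [entryP, if_pos hi]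
  · exact Finset.prod_congr rfl fun i hi => by rw [entryP, if_neg (Finset.mem_compl.mp hi)]

/-- Admissibility conditions on `(σ, S)` reproducing the values `s`. -/
def Hcond (n k : ℕ) (σ : Equiv.Perm (Fin n)) (S : Finset (Fin n)) (s : Fin n → ℕ) : Prop :=
  ∀ i : Fin n,
    (i ∈ S → (i : ℕ) < k ∧ n - k + (i : ℕ) ≤ (σ i : ℕ) ∧ s i = (σ i : ℕ) + k + 1 - n - (i : ℕ))
    ∧ (i ∉ S → (σ i : ℕ) ≤ (i : ℕ) ∧ (i : ℕ) ≤ (σ i : ℕ) + k ∧ s i = k + 1 + (σ i : ℕ) - (i : ℕ))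

theorem entry_eq_of_H {n k : ℕ} {σ : Equiv.Perm (Fin n)} {S : Finset (Fin n)} {s : Fin n → ℕ}
    (h : Hcond n k σ S s) (i : Fin n) :
    entryP n k σ S i = X (s i, (i : ℕ) + 1) := by
  by_cases hi : i ∈ S
  · obtain ⟨h1, h2, h3⟩ := (h i).1 hi
    rw [entryP, if_pos hi, bandX, if_pos ⟨h1, h2, (σ i).isLt⟩, genA, h3]
  · obtain ⟨h1, h2, h3⟩ := (h i).2 hi
    rw [entryP, if_neg hi, bandY, if_pos ⟨h1, h2, i.isLt⟩, genA, h3]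

theorem term_eq_of_H {n k : ℕ} {σ : Equiv.Perm (Fin n)} {S : Finset (Fin n)} {s : Fin n → ℕ}
    (h : Hcond n k σ S s) :
    term n k σ S = monomial (mres n s univ) 1 := by
  rw [term, Finset.prod_congr rfl (fun i _ => entry_eq_of_H h i), prod_X_eq]

theorem H_of_coeff {n k : ℕ} {σ : Equiv.Perm (Fin n)} {S : Finset (Fin n)} {s : Fin n → ℕ}
    (hc : MvPolynomial.coeff (mres n s univ) (term n k σ S) ≠ 0) :
    Hcond n k σ S s := by
  classical
  have hent : ∀ i : Fin n, entryP n k σ S i ≠ 0 := by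
    intro i h0
    exact hc (by rw [term, Finset.prod_eq_zero (Finset.mem_univ i) h0, MvPolynomial.coeff_zero])
  set s' : Fin n → ℕ := fun i =>
    if i ∈ S then (σ i : ℕ) + k + 1 - n - (i : ℕ) else k + 1 + (σ i : ℕ) - (i : ℕ) with hs'
  have hH : Hcond n k σ S s' := by
    intro i
    constructor
    · intro hi
      have := hent i
      rw [entryP, if_pos hi, bandX] at this
      by_cases hg : (i : ℕ) < k ∧ n - k + (i : ℕ) ≤ (σ i : ℕ) ∧ (σ i : ℕ) < n
      · exact ⟨hg.1, hg.2.1, by rw [hs']; simp [hi]⟩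
      · exact absurd (if_neg hg) this
    · intro hi
      have := hent i
      rw [entryP, if_neg hi, bandY] at this
      by_cases hg : (σ i : ℕ) ≤ (i : ℕ) ∧ (i : ℕ) ≤ (σ i : ℕ) + k ∧ (i : ℕ) < n
      · exact ⟨hg.1, hg.2.1, by rw [hs']; simp [hi]⟩
      · exact absurd (if_neg hg) this
  have hterm : term n k σ S = monomial (mres n s' univ) 1 := term_eq_of_H hH
  rw [hterm, coeff_monomial] at hc
  have heq : mres n s' univ = mres n s univ := by
    by_contra hne
    exact hc (if_neg hne)
  have hss : ∀ i, s' i = s i := mres_eq_iff n s' s heq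
  intro i
  refine ⟨fun hi => ?_, fun hi => ?_⟩
  · obtain ⟨a1, a2, a3⟩ := (hH i).1 hi
    exact ⟨a1, a2, by rw [← hss i, a3]⟩
  · obtain ⟨a1, a2, a3⟩ := (hH i).2 hi
    exact ⟨a1, a2, by rw [← hss i, a3]⟩

theorem sumId {n k : ℕ} (hkn : k < n) {σ : Equiv.Perm (Fin n)} {S : Finset (Fin n)}
    {s : Fin n → ℕ} (h : Hcond n k σ S s) :
    ∑ i : Fin n, ((k : ℤ) + 1 - s i) = n * S.card := by
  classical
  have hterm : ∀ i : Fin n, ((k : ℤ) + 1 - s i)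
      = (((i : ℕ) : ℤ) - ((σ i : ℕ) : ℤ)) + (if i ∈ S then (n : ℤ) else 0) := by
    intro i
    have hin : (i : ℕ) < n := i.isLt
    have hsn : (σ i : ℕ) < n := (σ i).isLt
    by_cases hi : i ∈ S
    · obtain ⟨h1, h2, h3⟩ := (h i).1 hi
      rw [if_pos hi]
      omega
    · obtain ⟨h1, h2, h3⟩ := (h i).2 hi
      rw [if_neg hi]
      omega
  rw [Finset.sum_congr rfl (fun i _ => hterm i), Finset.sum_add_distrib,
    Finset.sum_sub_distrib]
  have hperm : ∑ i : Fin n, ((σ i : ℕ) : ℤ) = ∑ i : Fin n, ((i : ℕ) : ℤ) :=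
    Equiv.sum_comp σ (fun j : Fin n => ((j : ℕ) : ℤ))
  rw [hperm, sub_self, zero_add, Finset.sum_ite_mem, Finset.univ_inter, Finset.sum_const,
    nsmul_eq_mul, mul_comm]

theorem Huniq {n k : ℕ} (hkn : k < n) {σ σ' : Equiv.Perm (Fin n)} {S S' : Finset (Fin n)}
    {s : Fin n → ℕ} (h1 : Hcond n k σ S s) (h2 : Hcond n k σ' S' s) :
    σ = σ' ∧ S = S' := by
  have key : ∀ i : Fin n, (σ i : ℕ) = (σ' i : ℕ) ∧ (i ∈ S ↔ i ∈ S') := by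
    intro i
    have hin : (i : ℕ) < n := i.isLt
    have hsn : (σ i : ℕ) < n := (σ i).isLt
    have hsn' : (σ' i : ℕ) < n := (σ' i).isLt
    by_cases hi : i ∈ S <;> by_cases hi' : i ∈ S'
    · obtain ⟨a1, a2, a3⟩ := (h1 i).1 hi
      obtain ⟨b1, b2, b3⟩ := (h2 i).1 hi'
      exact ⟨by omega, by simp [hi, hi']⟩
    · obtain ⟨a1, a2, a3⟩ := (h1 i).1 hi
      obtain ⟨b1, b2, b3⟩ := (h2 i).2 hi'
      omega
    · obtain ⟨a1, a2, a3⟩ := (h1 i).2 hi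
      obtain ⟨b1, b2, b3⟩ := (h2 i).1 hi'
      omega
    · obtain ⟨a1, a2, a3⟩ := (h1 i).2 hi
      obtain ⟨b1, b2, b3⟩ := (h2 i).2 hi'
      exact ⟨by omega, by simp [hi, hi']⟩
  exact ⟨Equiv.ext fun i => Fin.ext (key i).1, Finset.ext fun i => (key i).2⟩

end S16
namespace S16

open MvPolynomial Finset Equiv

/-- The candidate value of `c t`: signed sum over permutations and wrap-sets of size `t`. -/
def Fpoly (n k t : ℕ) : Rband :=
  ∑ σ : Equiv.Perm (Fin n), ((Equiv.Perm.sign σ : ℤ) : Rband) *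
    ∑ S ∈ (univ : Finset (Fin n)).powerset, if S.card = t then term n k σ S else 0

theorem F_whomog (n k t : ℕ) (u : ℕ → ℕ) :
    IsWeightedHomogeneous (wt u) (Fpoly n k t) (∑ i : Fin n, u ((i : ℕ) + 1)) := by
  classical
  apply IsWeightedHomogeneous.sum
  intro σ _
  have hterm : ∀ S : Finset (Fin n),
      IsWeightedHomogeneous (wt u) (term n k σ S) (∑ i : Fin n, u ((i : ℕ) + 1)) := by
    intro S
    rw [term]
    exact IsWeightedHomogeneous.prod (univ : Finset (Fin n)) _ (fun i : Fin n => u ((i : ℕ) + 1)) (fun i _ => by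
      rw [entryP]
      split_ifs with hi
      · rw [bandX]
        split_ifs with hg
        · exact isWeightedHomogeneous_X _ _ _
        · exact isWeightedHomogeneous_zero _ _ _
      · rw [bandY]
        split_ifs with hg
        · exact isWeightedHomogeneous_X _ _ _
        · exact isWeightedHomogeneous_zero _ _ _)
  have hsum : IsWeightedHomogeneous (wt u)
      (∑ S ∈ (univ : Finset (Fin n)).powerset, if S.card = t then term n k σ S else 0)
      (∑ i : Fin n, u ((i : ℕ) + 1)) := by
    apply IsWeightedHomogeneous.sum
    intro S _
    split_ifs with hS
    · exact hterm S
    · exact isWeightedHomogeneous_zero _ _ _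
  have hC : ((Equiv.Perm.sign σ : ℤ) : Rband) = C (((Equiv.Perm.sign σ : ℤ) : ℂ)) :=
    (map_intCast (C : ℂ →+* Rband) _).symm
  rw [hC, ← zero_add (∑ i : Fin n, u ((i : ℕ) + 1))]
  exact (isWeightedHomogeneous_C _ _).mul hsum

theorem F_whomog_uI (n k t : ℕ) (p : Fin n) :
    IsWeightedHomogeneous (wt (uI ((p : ℕ) + 1))) (Fpoly n k t) 1 := by
  have h := F_whomog n k t (uI ((p : ℕ) + 1))
  have hsum : (∑ i : Fin n, uI ((p : ℕ) + 1) ((i : ℕ) + 1)) = 1 := by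
    have : ∀ i : Fin n, uI ((p : ℕ) + 1) ((i : ℕ) + 1) = if i = p then 1 else 0 := by
      intro i
      rw [uI]
      congr 1
      rw [eq_iff_iff]
      exact ⟨fun hh => Fin.ext (by omega), fun hh => by rw [hh]⟩
    rw [Finset.sum_congr rfl (fun i _ => this i), Finset.sum_ite_eq' univ p (fun _ => (1 : ℕ)),
      if_pos (Finset.mem_univ p)]
  rwa [hsum] at h

theorem F_whomog_uO (n k t : ℕ) :
    IsWeightedHomogeneous (wt (uO n)) (Fpoly n k t) 0 := by
  have h := F_whomog n k t (uO n)
  have hsum : (∑ i : Fin n, uO n ((i : ℕ) + 1)) = 0 := by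
    refine Finset.sum_eq_zero fun i _ => ?_
    rw [uO, if_pos ⟨by omega, by have := i.isLt; omega⟩]
  rwa [hsum] at h

/-! ### Coefficients of `Fpoly` -/

theorem coeff_F_eq_zero (n k t : ℕ) (hkn : k < n) (s : Fin n → ℕ)
    (hs : ∑ i : Fin n, ((k : ℤ) + 1 - s i) ≠ n * t) :
    MvPolynomial.coeff (mres n s univ) (Fpoly n k t) = 0 := by
  classical
  rw [Fpoly, MvPolynomial.coeff_sum]
  refine Finset.sum_eq_zero fun σ _ => ?_
  rw [show ((Equiv.Perm.sign σ : ℤ) : Rband) = C (((Equiv.Perm.sign σ : ℤ) : ℂ)) from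
      (map_intCast (C : ℂ →+* Rband) _).symm,
    MvPolynomial.coeff_C_mul, MvPolynomial.coeff_sum]
  refine mul_eq_zero_of_right _ (Finset.sum_eq_zero fun S _ => ?_)
  split_ifs with hS
  · by_contra h0
    have hH := H_of_coeff h0
    have := sumId hkn hH
    rw [hS] at this
    exact hs (by rw [this])
  · exact MvPolynomial.coeff_zero _

theorem coeff_F_ne_zero (n k t : ℕ) (hn0 : 0 < n) (hkn : k < n)
    (σ₀ : Equiv.Perm (Fin n)) (S₀ : Finset (Fin n)) (s : Fin n → ℕ)
    (h0 : Hcond n k σ₀ S₀ s) (hsum : ∑ i : Fin n, ((k : ℤ) + 1 - s i) = n * t) :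
    MvPolynomial.coeff (mres n s univ) (Fpoly n k t) ≠ 0 := by
  classical
  have hcard : S₀.card = t := by
    have h1 := sumId hkn h0
    rw [hsum] at h1
    have h2 : ((t : ℕ) : ℤ) = ((S₀.card : ℕ) : ℤ) :=
      mul_left_cancel₀ (show ((n : ℕ) : ℤ) ≠ 0 by omega) h1
    omega
  have hval : MvPolynomial.coeff (mres n s univ) (Fpoly n k t)
      = ((Equiv.Perm.sign σ₀ : ℤ) : ℂ) := by
    rw [Fpoly, MvPolynomial.coeff_sum]
    rw [Finset.sum_eq_single σ₀]
    · rw [show ((Equiv.Perm.sign σ₀ : ℤ) : Rband) = C (((Equiv.Perm.sign σ₀ : ℤ) : ℂ)) from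
        (map_intCast (C : ℂ →+* Rband) _).symm,
        MvPolynomial.coeff_C_mul, MvPolynomial.coeff_sum]
      have hinner : ∑ S ∈ (univ : Finset (Fin n)).powerset,
          MvPolynomial.coeff (mres n s univ) (if S.card = t then term n k σ₀ S else 0) = 1 := by
        rw [Finset.sum_eq_single S₀]
        · rw [if_pos hcard, term_eq_of_H h0, coeff_monomial, if_pos rfl]
        · intro S _ hSne
          split_ifs with hS
          · by_contra hnz
            exact hSne (Huniq hkn (H_of_coeff hnz) h0).2
          · exact MvPolynomial.coeff_zero _
        · intro habs
          exact absurd (Finset.mem_powerset.mpr (Finset.subset_univ S₀)) habs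
      rw [hinner, mul_one]
    · intro σ _ hσne
      rw [show ((Equiv.Perm.sign σ : ℤ) : Rband) = C (((Equiv.Perm.sign σ : ℤ) : ℂ)) from
        (map_intCast (C : ℂ →+* Rband) _).symm,
        MvPolynomial.coeff_C_mul, MvPolynomial.coeff_sum]
      refine mul_eq_zero_of_right _ (Finset.sum_eq_zero fun S _ => ?_)
      split_ifs with hS
      · by_contra hnz
        exact hσne (Huniq hkn (H_of_coeff hnz) h0).1
      · exact MvPolynomial.coeff_zero _
    · intro habs
      exact absurd (Finset.mem_univ σ₀) habs
  rw [hval]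
  rcases Int.units_eq_one_or (Equiv.Perm.sign σ₀) with h | h <;> rw [h]
  · simp
  · simp

/-! ### Decomposition of multilinear monomials -/

theorem decomp (n : ℕ) (s : Fin n → ℕ) (P : Finset (Fin n)) (m1 m2 : (ℕ × ℕ) →₀ ℕ)
    (hadd : m1 + m2 = mres n s univ)
    (hdeg : ∀ j : Fin n, Finsupp.weight (wt (uI ((j : ℕ) + 1))) m1 = (if j ∈ P then 1 else 0)) :
    m1 = mres n s P := by
  classical
  have hle : ∀ v, m1 v ≤ mres n s univ v := by
    intro v
    rw [← hadd, Finsupp.add_apply]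
    exact Nat.le_add_right _ _
  ext v
  obtain ⟨x, y⟩ := v
  by_cases hy : ∃ i : Fin n, y = (i : ℕ) + 1 ∧ x = s i
  · obtain ⟨i, rfl, rfl⟩ := hy
    have hw : Finsupp.weight (wt (uI ((i : ℕ) + 1))) m1 = m1 (s i, (i : ℕ) + 1) := by
      rw [Finsupp.weight_apply, Finsupp.sum]
      rw [Finset.sum_eq_single (s i, (i : ℕ) + 1)]
      · by_cases hmem : (s i, (i : ℕ) + 1) ∈ m1.support
        · simp [wt, uI]
        · rw [Finsupp.notMem_support_iff.mp hmem]; simp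
      · intro v' hv' hne
        rcases eq_or_ne (v'.2) ((i : ℕ) + 1) with h2 | h2
        · have h0 : m1 v' = 0 := by
            have hv'le := hle v'
            have hz : mres n s univ v' = 0 := by
              apply mres_apply_out
              intro j hj
              apply hne
              have hj2 : v'.2 = (j : ℕ) + 1 := congrArg Prod.snd hj
              have hji : j = i := Fin.ext (by omega)
              rw [hj, hji]
            omega
          rw [h0, zero_smul]
        · simp [wt, uI, h2]
      · intro hmem
        rw [Finsupp.notMem_support_iff.mp hmem]; simp
    rw [← hw, hdeg i, mres_apply_pair]
    simp
  · have h1 : mres n s univ (x, y) = 0 := by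
      apply mres_apply_out
      intro j hj
      exact hy ⟨j, congrArg Prod.snd hj, congrArg Prod.fst hj⟩
    have h2 : mres n s P (x, y) = 0 := by
      apply mres_apply_out
      intro j hj
      exact hy ⟨j, congrArg Prod.snd hj, congrArg Prod.fst hj⟩
    have := hle (x, y)
    omega

theorem coeff_split (n : ℕ) (g h : Rband) (P : Finset (Fin n)) (s : Fin n → ℕ)
    (hg : ∀ j : Fin n, IsWeightedHomogeneous (wt (uI ((j : ℕ) + 1))) g (if j ∈ P then 1 else 0))
    (hh : ∀ j : Fin n, IsWeightedHomogeneous (wt (uI ((j : ℕ) + 1))) h (if j ∈ Pᶜ then 1 else 0)) :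
    MvPolynomial.coeff (mres n s univ) (g * h)
      = MvPolynomial.coeff (mres n s P) g * MvPolynomial.coeff (mres n s Pᶜ) h := by
  classical
  rw [MvPolynomial.coeff_mul]
  apply Finset.sum_eq_single_of_mem (mres n s P, mres n s Pᶜ)
  · exact Finset.HasAntidiagonal.mem_antidiagonal.mpr (mres_add_compl n s P)
  · rintro ⟨m1, m2⟩ hmem hne
    have hadd : m1 + m2 = mres n s univ := Finset.HasAntidiagonal.mem_antidiagonal.mp hmem
    by_contra hnz
    have h1 : MvPolynomial.coeff m1 g ≠ 0 := fun h0 => hnz (by rw [h0, zero_mul])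
    have h2 : MvPolynomial.coeff m2 h ≠ 0 := fun h0 => hnz (by rw [h0, mul_zero])
    have hm1 : m1 = mres n s P := decomp n s P m1 m2 hadd (fun j => hg j h1)
    have hm2 : m2 = mres n s Pᶜ := by
      have hadd2 : m2 + m1 = mres n s univ := by rw [add_comm]; exact hadd
      exact decomp n s Pᶜ m2 m1 hadd2 (fun j => hh j h2)
    exact hne (by rw [hm1, hm2])

end S16
namespace S16

open MvPolynomial Finset Equiv

theorem exp_eq_iff (b a b' a' : ℕ) :
    (Finsupp.single (0 : Fin 2) b + Finsupp.single 1 a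
      = Finsupp.single (0 : Fin 2) b' + Finsupp.single 1 a') ↔ (b = b' ∧ a = a') := by
  constructor
  · intro h
    have h0 := DFunLike.congr_fun h (0 : Fin 2)
    have h1 := DFunLike.congr_fun h (1 : Fin 2)
    rw [Finsupp.add_apply, Finsupp.add_apply, Finsupp.single_eq_same,
      Finsupp.single_eq_of_ne (by decide), Finsupp.single_eq_same,
      Finsupp.single_eq_of_ne (by decide)] at h0
    rw [Finsupp.add_apply, Finsupp.add_apply, Finsupp.single_eq_same,
      Finsupp.single_eq_of_ne (by decide), Finsupp.single_eq_same,
      Finsupp.single_eq_of_ne (by decide)] at h1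
    omega
  · rintro ⟨rfl, rfl⟩; rfl

theorem coeff_E (b a b' a' : ℕ) (r : Rband) :
    MvPolynomial.coeff (Finsupp.single (0 : Fin 2) b' + Finsupp.single 1 a')
      (C r * X 0 ^ b * X 1 ^ a) = if b = b' ∧ a = a' then r else 0 := by
  rw [X_pow_eq_monomial, X_pow_eq_monomial, C_apply, monomial_mul, monomial_mul,
    coeff_monomial]
  rw [zero_add, mul_one, mul_one]
  by_cases h : b = b' ∧ a = a'
  · rw [if_pos ((exp_eq_iff b a b' a').mpr h), if_pos h]
  · rw [if_neg (fun hh => h ((exp_eq_iff b a b' a').mp hh)), if_neg h]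

theorem ct_eq_F (n k t : ℕ) (hk : 2 ≤ k) (hn : k < n) (ht : t ≤ k) (c : ℕ → Rband)
    (hc : detLM n (bandX n k genA) (bandY n k genA)
        = (MvPolynomial.X 0 : MvPolynomial (Fin 2) Rband) ^ (n - k)
          * ∑ i ∈ Finset.range (k + 1), MvPolynomial.C (c i)
              * (MvPolynomial.X 1 : MvPolynomial (Fin 2) Rband) ^ i
              * (MvPolynomial.X 0 : MvPolynomial (Fin 2) Rband) ^ (k - i)) :
    c t = Fpoly n k t := by
  classical
  set E : Fin 2 →₀ ℕ := Finsupp.single 0 (n - t) + Finsupp.single 1 t with hE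
  have hR : MvPolynomial.coeff E
      ((MvPolynomial.X 0 : MvPolynomial (Fin 2) Rband) ^ (n - k)
        * ∑ i ∈ Finset.range (k + 1), MvPolynomial.C (c i)
            * (MvPolynomial.X 1 : MvPolynomial (Fin 2) Rband) ^ i
            * (MvPolynomial.X 0 : MvPolynomial (Fin 2) Rband) ^ (k - i)) = c t := by
    rw [Finset.mul_sum, MvPolynomial.coeff_sum]
    have hterm : ∀ i ∈ Finset.range (k + 1),
        MvPolynomial.coeff E ((MvPolynomial.X 0 : MvPolynomial (Fin 2) Rband) ^ (n - k)
          * (MvPolynomial.C (c i) * MvPolynomial.X 1 ^ i * MvPolynomial.X 0 ^ (k - i)))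
        = if i = t then c i else 0 := by
      intro i hi
      have hik : i ≤ k := by
        have := Finset.mem_range.mp hi; omega
      have hshape : (MvPolynomial.X 0 : MvPolynomial (Fin 2) Rband) ^ (n - k)
          * (MvPolynomial.C (c i) * MvPolynomial.X 1 ^ i * MvPolynomial.X 0 ^ (k - i))
          = C (c i) * X 0 ^ (n - k + (k - i)) * X 1 ^ i := by
        rw [pow_add]; ring
      rw [hshape, show n - k + (k - i) = n - i by omega, hE, coeff_E]
      by_cases hit : i = t
      · rw [if_pos ⟨by rw [hit], hit⟩, if_pos hit]
      · rw [if_neg (fun hh => hit hh.2), if_neg hit]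
    rw [Finset.sum_congr rfl hterm, Finset.sum_ite_eq' (Finset.range (k + 1)) t c,
      if_pos (Finset.mem_range.mpr (by omega))]
  have hL : MvPolynomial.coeff E (detLM n (bandX n k genA) (bandY n k genA))
      = Fpoly n k t := by
    rw [detLM, ← Matrix.det_transpose, Matrix.det_apply']
    have hentry : ∀ (σ : Equiv.Perm (Fin n)) (i : Fin n),
        ((((MvPolynomial.X 0 : MvPolynomial (Fin 2) Rband)
            • (toSq n (bandY n k genA)).map (fun p => (MvPolynomial.C p : MvPolynomial (Fin 2) Rband))
          + (MvPolynomial.X 1 : MvPolynomial (Fin 2) Rband)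
            • (toSq n (bandX n k genA)).map (fun p => (MvPolynomial.C p : MvPolynomial (Fin 2) Rband))))ᵀ (σ i) i)
        = X 1 * C (bandX n k genA (i : ℕ) ((σ i : ℕ)))
          + X 0 * C (bandY n k genA (i : ℕ) ((σ i : ℕ))) := by
      intro σ i
      rw [Matrix.transpose_apply, Matrix.add_apply, Matrix.smul_apply, Matrix.smul_apply,
        Matrix.map_apply, Matrix.map_apply, smul_eq_mul, smul_eq_mul]
      rw [toSq, toSq, Matrix.of_apply, Matrix.of_apply, add_comm]
    have hprod : ∀ σ : Equiv.Perm (Fin n),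
        (∏ i : Fin n, ((((MvPolynomial.X 0 : MvPolynomial (Fin 2) Rband)
            • (toSq n (bandY n k genA)).map (fun p => (MvPolynomial.C p : MvPolynomial (Fin 2) Rband))
          + (MvPolynomial.X 1 : MvPolynomial (Fin 2) Rband)
            • (toSq n (bandX n k genA)).map (fun p => (MvPolynomial.C p : MvPolynomial (Fin 2) Rband))))ᵀ (σ i) i))
        = ∑ S ∈ (univ : Finset (Fin n)).powerset,
            C ((∏ i ∈ S, bandX n k genA (i : ℕ) ((σ i : ℕ)))
                * ∏ i ∈ Sᶜ, bandY n k genA (i : ℕ) ((σ i : ℕ)))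
              * X 0 ^ (Sᶜ.card) * X 1 ^ (S.card) := by
      intro σ
      rw [Finset.prod_congr rfl (fun i _ => hentry σ i), Finset.prod_add]
      refine Finset.sum_congr rfl fun S _ => ?_
      rw [← Finset.compl_eq_univ_sdiff, Finset.prod_mul_distrib, Finset.prod_mul_distrib,
        Finset.prod_const, Finset.prod_const, ← map_prod, ← map_prod, _root_.map_mul]
      ring
    rw [Finset.sum_congr rfl (fun σ _ => by rw [hprod σ]), MvPolynomial.coeff_sum, Fpoly]
    refine Finset.sum_congr rfl fun σ _ => ?_
    rw [show ((Equiv.Perm.sign σ : ℤ) : MvPolynomial (Fin 2) Rband)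
        = MvPolynomial.C (((Equiv.Perm.sign σ : ℤ) : Rband)) from
        (map_intCast (MvPolynomial.C : Rband →+* MvPolynomial (Fin 2) Rband) _).symm,
      MvPolynomial.coeff_C_mul, MvPolynomial.coeff_sum]
    congr 1
    refine Finset.sum_congr rfl fun S _ => ?_
    rw [hE, coeff_E]
    have hcompl : Sᶜ.card = n - S.card := by
      rw [Finset.card_compl, Fintype.card_fin]
    by_cases hS : S.card = t
    · rw [if_pos ⟨by rw [hcompl, hS], hS⟩, if_pos hS, term_eq_prods]
    · rw [if_neg (fun hh => hS hh.2), if_neg hS]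
  rw [← hR, ← hc, hL]

end S16
namespace S16

open MvPolynomial Finset Equiv

section Concrete

variable {n k t : ℕ} [NeZero n]

theorem fin_sub_val (a b : Fin n) :
    ((a - b : Fin n) : ℕ) = if (b : ℕ) ≤ (a : ℕ) then (a : ℕ) - (b : ℕ)
      else (a : ℕ) + n - (b : ℕ) := by
  have hb : (b : ℕ) < n := b.isLt
  have ha : (a : ℕ) < n := a.isLt
  have hval : ((a - b : Fin n) : ℕ) = (n - (b : ℕ) + (a : ℕ)) % n := by
    rw [Fin.sub_def]
  rw [hval]
  split_ifs with h
  · have h1 : n - (b : ℕ) + (a : ℕ) = n + ((a : ℕ) - (b : ℕ)) := by omega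
    rw [h1, Nat.add_mod_left]
    exact Nat.mod_eq_of_lt (by omega)
  · rw [Nat.mod_eq_of_lt (by omega)]
    omega

theorem val_add_one (hn2 : 2 ≤ n) (p : Fin n) :
    ((p + 1 : Fin n) : ℕ) = if (p : ℕ) = n - 1 then 0 else (p : ℕ) + 1 := by
  have h1 : ((1 : Fin n) : ℕ) = 1 := by
    rw [Fin.val_one']
    exact Nat.mod_eq_of_lt (by omega)
  have hp : (p : ℕ) < n := p.isLt
  rw [Fin.val_add, h1]
  split_ifs with h
  · rw [h, show n - 1 + 1 = n by omega, Nat.mod_self]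
  · exact Nat.mod_eq_of_lt (by omega)

theorem ne_add_one (hn2 : 2 ≤ n) (p : Fin n) : p ≠ p + 1 := by
  intro h
  have h2 := congrArg Fin.val h
  rw [val_add_one hn2 p] at h2
  have hp : (p : ℕ) < n := p.isLt
  split_ifs at h2 <;> omega

open Fin.NatCast in
/-- the cyclic shift by `t` -/
def sigC (n t : ℕ) [NeZero n] : Equiv.Perm (Fin n) := Equiv.subRight ((t : Fin n))

/-- the shift composed with an adjacent transposition -/
def sigE (n t : ℕ) [NeZero n] (p : Fin n) : Equiv.Perm (Fin n) :=
  (sigC n t) * (Equiv.swap p (p + 1))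

/-- the constant value tuple -/
def scv (n k t : ℕ) : Fin n → ℕ := fun _ => k + 1 - t

/-- the perturbed value tuple -/
def sev (n k t : ℕ) [NeZero n] (p : Fin n) : Fin n → ℕ := fun i =>
  if i = p then k + 2 - t else if i = p + 1 then k - t else k + 1 - t

theorem sigC_apply_val (ht : t < n) (i : Fin n) :
    ((sigC n t i : ℕ)) = if t ≤ (i : ℕ) then (i : ℕ) - t else (i : ℕ) + n - t := by
  rw [sigC, Equiv.subRight_apply, fin_sub_val, Fin.val_cast_of_lt ht]

theorem Hcond_arith (σ : Equiv.Perm (Fin n)) (s : Fin n → ℕ)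
    (hall : ∀ i : Fin n,
      ((i : ℕ) < (σ i : ℕ) →
        (i : ℕ) < k ∧ n - k + (i : ℕ) ≤ (σ i : ℕ) ∧ s i = (σ i : ℕ) + k + 1 - n - (i : ℕ))
      ∧ ((σ i : ℕ) ≤ (i : ℕ) →
        (σ i : ℕ) ≤ (i : ℕ) ∧ (i : ℕ) ≤ (σ i : ℕ) + k ∧ s i = k + 1 + (σ i : ℕ) - (i : ℕ))) :
    Hcond n k σ (univ.filter fun i => (i : ℕ) < ((σ i : ℕ))) s := by
  intro i
  constructor
  · intro hi
    exact (hall i).1 (Finset.mem_filter.mp hi).2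
  · intro hi
    have hcon : ¬ ((i : ℕ) < (σ i : ℕ)) :=
      fun hcon => hi (Finset.mem_filter.mpr ⟨mem_univ i, hcon⟩)
    exact (hall i).2 (by omega)

theorem Hc (hk : 2 ≤ k) (hkn : k < n) (ht1 : 1 ≤ t) (ht2 : t ≤ k - 1) :
    Hcond n k (sigC n t) (univ.filter fun i => (i : ℕ) < ((sigC n t i : ℕ))) (scv n k t) := by
  apply Hcond_arith
  intro i
  have hin : (i : ℕ) < n := i.isLt
  have hv := sigC_apply_val (t := t) (n := n) (by omega) i
  have hs : scv n k t i = k + 1 - t := rfl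
  rcases le_or_gt t (i : ℕ) with h | h
  · rw [if_pos h] at hv
    exact ⟨fun hmm => by omega, fun hmm => ⟨by omega, by omega, by rw [hs]; omega⟩⟩
  · rw [if_neg (by omega)] at hv
    exact ⟨fun hmm => ⟨by omega, by omega, by rw [hs]; omega⟩, fun hmm => by omega⟩

theorem He (hk : 2 ≤ k) (hkn : k < n) (ht1 : 1 ≤ t) (ht2 : t ≤ k - 1) (p : Fin n) :
    Hcond n k (sigE n t p) (univ.filter fun i => (i : ℕ) < ((sigE n t p i : ℕ)))
      (sev n k t p) := by
  have hn2 : 2 ≤ n := by omega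
  have hpq := ne_add_one hn2 p
  have hqv := val_add_one hn2 p
  have hpn : (p : ℕ) < n := p.isLt
  apply Hcond_arith
  intro i
  have hin : (i : ℕ) < n := i.isLt
  by_cases hip : i = p
  · have hv : sigE n t p i = sigC n t (p + 1) := by
      rw [hip, sigE, Equiv.Perm.mul_apply, Equiv.swap_apply_left]
    have hs : sev n k t p i = k + 2 - t := by
      simp only [sev]; rw [if_pos hip]
    have hcv := sigC_apply_val (t := t) (n := n) (by omega) (p + 1)
    rw [hv, hs, hip]
    rw [hqv] at hcv
    by_cases hpn1 : (p : ℕ) = n - 1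
    · rw [if_pos hpn1, if_neg (by omega : ¬ t ≤ 0)] at hcv
      exact ⟨fun hmm => by omega, fun hmm => ⟨by omega, by omega, by omega⟩⟩
    · rw [if_neg hpn1] at hcv
      rcases le_or_gt t ((p : ℕ) + 1) with h | h
      · rw [if_pos h] at hcv
        exact ⟨fun hmm => by omega, fun hmm => ⟨by omega, by omega, by omega⟩⟩
      · rw [if_neg (by omega)] at hcv
        exact ⟨fun hmm => ⟨by omega, by omega, by omega⟩, fun hmm => by omega⟩
  · by_cases hiq : i = p + 1
    · have hv : sigE n t p i = sigC n t p := by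
        rw [hiq, sigE, Equiv.Perm.mul_apply, Equiv.swap_apply_right]
      have hs : sev n k t p i = k - t := by
        simp only [sev]; rw [if_neg hip, if_pos hiq]
      have hcv := sigC_apply_val (t := t) (n := n) (by omega) p
      rw [hv, hs, hiq, hqv]
      by_cases hpn1 : (p : ℕ) = n - 1
      · rw [if_pos (by omega : t ≤ (p : ℕ))] at hcv
        rw [if_pos hpn1]
        exact ⟨fun hmm => ⟨by omega, by omega, by omega⟩, fun hmm => by omega⟩
      · rw [if_neg hpn1]
        rcases le_or_gt t (p : ℕ) with h | h
        · rw [if_pos h] at hcv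
          exact ⟨fun hmm => by omega, fun hmm => ⟨by omega, by omega, by omega⟩⟩
        · rw [if_neg (by omega)] at hcv
          exact ⟨fun hmm => ⟨by omega, by omega, by omega⟩, fun hmm => by omega⟩
    · have hv : sigE n t p i = sigC n t i := by
        rw [sigE, Equiv.Perm.mul_apply, Equiv.swap_apply_of_ne_of_ne hip hiq]
      have hs : sev n k t p i = k + 1 - t := by
        simp only [sev]; rw [if_neg hip, if_neg hiq]
      have hcv := sigC_apply_val (t := t) (n := n) (by omega) i
      rw [hv, hs]
      rcases le_or_gt t (i : ℕ) with h | h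
      · rw [if_pos h] at hcv
        exact ⟨fun hmm => by omega, fun hmm => ⟨by omega, by omega, by omega⟩⟩
      · rw [if_neg (by omega)] at hcv
        exact ⟨fun hmm => ⟨by omega, by omega, by omega⟩, fun hmm => by omega⟩

theorem sum_scv (hk : 2 ≤ k) (ht2 : t ≤ k - 1) :
    ∑ i : Fin n, ((k : ℤ) + 1 - scv n k t i) = n * t := by
  have h1 : ∀ i : Fin n, ((k : ℤ) + 1 - scv n k t i) = (t : ℤ) := by
    intro i
    have hs : scv n k t i = k + 1 - t := rfl
    rw [hs]
    omega
  rw [Finset.sum_congr rfl (fun i _ => h1 i), Finset.sum_const, Finset.card_univ,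
    Fintype.card_fin, nsmul_eq_mul]

theorem sum_sev (hn2 : 2 ≤ n) (hk : 2 ≤ k) (ht1 : 1 ≤ t) (ht2 : t ≤ k - 1) (p : Fin n) :
    ∑ i : Fin n, ((k : ℤ) + 1 - sev n k t p i) = n * t := by
  have hpq := ne_add_one hn2 p
  have h1 : ∀ i : Fin n, ((k : ℤ) + 1 - sev n k t p i)
      = (t : ℤ) + ((if i = p then (-1 : ℤ) else 0) + (if i = p + 1 then (1 : ℤ) else 0)) := by
    intro i
    by_cases hip : i = p
    · rw [if_pos hip, if_neg (by rw [hip]; exact hpq)]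
      simp only [sev]; rw [if_pos hip]
      omega
    · rw [if_neg hip]
      by_cases hiq : i = p + 1
      · rw [if_pos hiq]
        simp only [sev]; rw [if_neg hip, if_pos hiq]
        omega
      · rw [if_neg hiq]
        simp only [sev]; rw [if_neg hip, if_neg hiq]
        omega
  rw [Finset.sum_congr rfl (fun i _ => h1 i), Finset.sum_add_distrib, Finset.sum_add_distrib,
    Finset.sum_const, Finset.card_univ, Fintype.card_fin, nsmul_eq_mul,
    Finset.sum_ite_eq' univ p (fun _ => (-1 : ℤ)),
    Finset.sum_ite_eq' univ (p + 1) (fun _ => (1 : ℤ)),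
    if_pos (mem_univ p), if_pos (mem_univ (p + 1))]
  ring

theorem sum_mixed (hn2 : 2 ≤ n) (hk : 2 ≤ k) (ht1 : 1 ≤ t) (ht2 : t ≤ k - 1) (p : Fin n)
    (P : Finset (Fin n)) (hpP : p ∈ P) (hqP : p + 1 ∉ P) :
    ∑ i : Fin n, ((k : ℤ) + 1 - (if i ∈ P then sev n k t p i else scv n k t i))
      = n * t - 1 := by
  have hpq := ne_add_one hn2 p
  have h1 : ∀ i : Fin n, ((k : ℤ) + 1 - (if i ∈ P then sev n k t p i else scv n k t i))
      = (t : ℤ) + (if i = p then (-1 : ℤ) else 0) := by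
    intro i
    by_cases hip : i = p
    · rw [if_pos (show i ∈ P by rw [hip]; exact hpP), if_pos hip]
      simp only [sev]; rw [if_pos hip]
      omega
    · rw [if_neg hip]
      by_cases hiP : i ∈ P
      · rw [if_pos hiP]
        by_cases hiq : i = p + 1
        · exact absurd hiP (by rw [hiq]; exact hqP)
        · simp only [sev]; rw [if_neg hip, if_neg hiq]
          omega
      · rw [if_neg hiP]
        have hs : scv n k t i = k + 1 - t := rfl
        rw [hs]
        omega
  rw [Finset.sum_congr rfl (fun i _ => h1 i), Finset.sum_add_distrib, Finset.sum_const,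
    Finset.card_univ, Fintype.card_fin, nsmul_eq_mul,
    Finset.sum_ite_eq' univ p (fun _ => (-1 : ℤ)), if_pos (mem_univ p)]
  ring

open Fin.NatCast in
theorem cycle_boundary (P : Finset (Fin n)) (h1 : P.Nonempty) (h2 : P ≠ univ) :
    ∃ p ∈ P, p + 1 ∉ P := by
  by_contra hcon
  push_neg at hcon
  obtain ⟨a, ha⟩ := h1
  have hall : ∀ m : ℕ, a + (m : Fin n) ∈ P := by
    intro m
    induction m with
    | zero => simpa using ha
    | succ m ih =>
        have hstep : a + ((m + 1 : ℕ) : Fin n) = (a + (m : Fin n)) + 1 := by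
          push_cast
          simp only [Nat.cast_add, Nat.cast_one, add_assoc]
        rw [hstep]
        exact hcon _ ih
  apply h2
  rw [Finset.eq_univ_iff_forall]
  intro b
  have hb := hall ((b - a : Fin n) : ℕ)
  rwa [Fin.cast_val_eq_self, add_comm, sub_add_cancel] at hb

end Concrete

theorem weight_zero_imp (w : ℕ × ℕ → ℕ) (m : (ℕ × ℕ) →₀ ℕ)
    (h : Finsupp.weight w m = 0) (v : ℕ × ℕ) (hv : w v ≠ 0) : m v = 0 := by
  by_contra hmv
  have hvs : v ∈ m.support := Finsupp.mem_support_iff.mpr hmv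
  rw [Finsupp.weight_apply, Finsupp.sum] at h
  have h0 := (Finset.sum_eq_zero_iff.mp h) v hvs
  rw [smul_eq_mul] at h0
  rcases Nat.mul_eq_zero.mp h0 with h | h
  · exact hmv h
  · exact hv h

theorem const_unit (n : ℕ) (hn0 : 0 < n) (f : Rband) (hf : f ≠ 0)
    (h1 : ∀ j : Fin n, IsWeightedHomogeneous (wt (uI ((j : ℕ) + 1))) f 0)
    (h2 : IsWeightedHomogeneous (wt (uO n)) f 0) : IsUnit f := by
  have hzero : ∀ m : (ℕ × ℕ) →₀ ℕ, MvPolynomial.coeff m f ≠ 0 → m = 0 := by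
    intro m hm
    ext v
    obtain ⟨x, y⟩ := v
    by_cases hy : 1 ≤ y ∧ y ≤ n
    · refine weight_zero_imp _ m (h1 ⟨y - 1, by omega⟩ hm) (x, y) ?_
      have : wt (uI (((⟨y - 1, by omega⟩ : Fin n) : ℕ) + 1)) (x, y) = 1 := by
        simp only [wt, uI]
        rw [if_pos (by omega)]
      rw [this]
      exact one_ne_zero
    · refine weight_zero_imp _ m (h2 hm) (x, y) ?_
      have : wt (uO n) (x, y) = 1 := by
        simp only [wt, uO]
        rw [if_neg (by omega)]
      rw [this]
      exact one_ne_zero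
  have hfC : f = C (MvPolynomial.coeff 0 f) := by
    apply MvPolynomial.ext
    intro m
    rw [MvPolynomial.coeff_C]
    by_cases hm0 : (0 : (ℕ × ℕ) →₀ ℕ) = m
    · rw [if_pos hm0, ← hm0]
    · rw [if_neg hm0]
      by_contra hne
      exact hm0 ((hzero m hne).symm)
  rw [hfC]
  refine IsUnit.map (C : ℂ →+* Rband) (isUnit_iff_ne_zero.mpr ?_)
  intro h0
  exact hf (by rw [hfC, h0, map_zero])

end S16
/-- in the generic band situation the coefficients `c_t`, `1 ≤ t ≤ k-1`,
are irreducible. -/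
theorem statement16 (n k : ℕ) (hk : 2 ≤ k) (hn : k < n) (c : ℕ → Rband)
    (hc : detLM n (bandX n k genA) (bandY n k genA)
        = (MvPolynomial.X 0 : MvPolynomial (Fin 2) Rband) ^ (n - k)
          * ∑ i ∈ Finset.range (k + 1), MvPolynomial.C (c i)
              * (MvPolynomial.X 1 : MvPolynomial (Fin 2) Rband) ^ i
              * (MvPolynomial.X 0 : MvPolynomial (Fin 2) Rband) ^ (k - i)) :
    ∀ t : ℕ, 1 ≤ t → t ≤ k - 1 → Irreducible (c t) := by
  classical
  intro t ht1 ht2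
  open S16 MvPolynomial in
  have hn0 : 0 < n := by omega
  haveI : NeZero n := ⟨by omega⟩
  have hn2 : 2 ≤ n := by omega
  have htk : t ≤ k := by omega
  have hF : c t = S16.Fpoly n k t := S16.ct_eq_F n k t hk hn htk c hc
  have hsumc : ∑ i : Fin n, ((k : ℤ) + 1 - S16.scv n k t i) = n * t := S16.sum_scv hk ht2
  have hnzc : MvPolynomial.coeff (S16.mres n (S16.scv n k t) Finset.univ) (S16.Fpoly n k t)
      ≠ 0 :=
    S16.coeff_F_ne_zero n k t hn0 hn _ _ _ (S16.Hc hk hn ht1 ht2) hsumc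
  have hnz : c t ≠ 0 := by
    intro h0
    exact hnzc (by rw [← hF, h0, MvPolynomial.coeff_zero])
  constructor
  · intro hu
    obtain ⟨v, hv⟩ := hu
    have hq0 : ((v⁻¹ : Rbandˣ) : Rband) ≠ 0 := Units.ne_zero _
    have hmul : c t * ((v⁻¹ : Rbandˣ) : Rband) = 1 := by rw [← hv, Units.mul_inv]
    obtain ⟨a, b, hab, hpa, -⟩ :=
      S16.factor_whomog (S16.wt (S16.uI (((⟨0, hn0⟩ : Fin n) : ℕ) + 1))) hnz hq0
        (by rw [hmul]; exact MvPolynomial.isWeightedHomogeneous_one _ _)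
    have hct1 : MvPolynomial.IsWeightedHomogeneous
        (S16.wt (S16.uI (((⟨0, hn0⟩ : Fin n) : ℕ) + 1))) (c t) 1 := by
      rw [hF]; exact S16.F_whomog_uI n k t ⟨0, hn0⟩
    have h10 : (1 : ℕ) = a := MvPolynomial.IsWeightedHomogeneous.inj_right hnz hct1 hpa
    omega
  · intro g h hgh
    by_contra hcon
    push_neg at hcon
    obtain ⟨hgu, hhu⟩ := hcon
    have hg0 : g ≠ 0 := fun h0 => hnz (by rw [hgh, h0, zero_mul])
    have hh0 : h ≠ 0 := fun h0 => hnz (by rw [hgh, h0, mul_zero])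
    have hmain : ∀ j : Fin n, ∃ a b : ℕ, a + b = 1
        ∧ MvPolynomial.IsWeightedHomogeneous (S16.wt (S16.uI ((j : ℕ) + 1))) g a
        ∧ MvPolynomial.IsWeightedHomogeneous (S16.wt (S16.uI ((j : ℕ) + 1))) h b := fun j =>
      S16.factor_whomog _ hg0 hh0 (by rw [← hgh, hF]; exact S16.F_whomog_uI n k t j)
    choose A B hAB hgA hhB using hmain
    obtain ⟨aO, bO, habO, hgO, hhO⟩ :=
      S16.factor_whomog (S16.wt (S16.uO n)) hg0 hh0
        (by rw [← hgh, hF]; exact S16.F_whomog_uO n k t)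
    have haO : aO = 0 := by omega
    have hbO : bO = 0 := by omega
    set P : Finset (Fin n) := Finset.univ.filter (fun j => A j = 1) with hP
    have hmemP : ∀ j : Fin n, j ∈ P ↔ A j = 1 := by
      intro j; rw [hP, Finset.mem_filter]; simp
    have hPne : P.Nonempty := by
      rw [Finset.nonempty_iff_ne_empty]
      intro hempty
      apply hgu
      apply S16.const_unit n hn0 g hg0
      · intro j
        have hj : A j = 0 := by
          have h1 := hAB j
          have h2 : ¬ A j = 1 := fun hcc => by
            have := (hmemP j).mpr hcc
            rw [hempty] at this
            exact absurd this (Finset.notMem_empty j)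
          omega
        exact hj ▸ hgA j
      · exact haO ▸ hgO
    have hPu : P ≠ Finset.univ := by
      intro hPu
      apply hhu
      apply S16.const_unit n hn0 h hh0
      · intro j
        have hj : B j = 0 := by
          have h1 := hAB j
          have h2 : A j = 1 := (hmemP j).mp (hPu ▸ Finset.mem_univ j)
          omega
        exact hj ▸ hhB j
      · exact hbO ▸ hhO
    obtain ⟨p, hpP, hqP⟩ := S16.cycle_boundary P hPne hPu
    have hgdeg : ∀ j : Fin n, MvPolynomial.IsWeightedHomogeneous (S16.wt (S16.uI ((j : ℕ) + 1)))
        g (if j ∈ P then 1 else 0) := by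
      intro j
      by_cases hj : j ∈ P
      · rw [if_pos hj]
        exact ((hmemP j).mp hj) ▸ hgA j
      · rw [if_neg hj]
        have hj0 : A j = 0 := by
          have h1 := hAB j
          have h2 : ¬ A j = 1 := fun hcc => hj ((hmemP j).mpr hcc)
          omega
        exact hj0 ▸ hgA j
    have hhdeg : ∀ j : Fin n, MvPolynomial.IsWeightedHomogeneous (S16.wt (S16.uI ((j : ℕ) + 1)))
        h (if j ∈ Pᶜ then 1 else 0) := by
      intro j
      by_cases hj : j ∈ P
      · rw [if_neg (fun hcc => (Finset.mem_compl.mp hcc) hj)]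
        have hj0 : B j = 0 := by
          have h1 := hAB j
          have h2 : A j = 1 := (hmemP j).mp hj
          omega
        exact hj0 ▸ hhB j
      · rw [if_pos (Finset.mem_compl.mpr hj)]
        have hj0 : B j = 1 := by
          have h1 := hAB j
          have h2 : ¬ A j = 1 := fun hcc => hj ((hmemP j).mpr hcc)
          omega
        exact hj0 ▸ hhB j
    have hsume : ∑ i : Fin n, ((k : ℤ) + 1 - S16.sev n k t p i) = n * t :=
      S16.sum_sev hn2 hk ht1 ht2 p
    have hnze : MvPolynomial.coeff (S16.mres n (S16.sev n k t p) Finset.univ)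
        (S16.Fpoly n k t) ≠ 0 :=
      S16.coeff_F_ne_zero n k t hn0 hn _ _ _ (S16.He hk hn ht1 ht2 p) hsume
    have hgh' : g * h = S16.Fpoly n k t := by rw [← hgh, hF]
    have hc2 : MvPolynomial.coeff (S16.mres n (S16.scv n k t) P) g
        * MvPolynomial.coeff (S16.mres n (S16.scv n k t) Pᶜ) h ≠ 0 := by
      rw [← S16.coeff_split n g h P (S16.scv n k t) hgdeg hhdeg, hgh']
      exact hnzc
    have he2 : MvPolynomial.coeff (S16.mres n (S16.sev n k t p) P) g
        * MvPolynomial.coeff (S16.mres n (S16.sev n k t p) Pᶜ) h ≠ 0 := by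
      rw [← S16.coeff_split n g h P (S16.sev n k t p) hgdeg hhdeg, hgh']
      exact hnze
    have h_h : MvPolynomial.coeff (S16.mres n (S16.scv n k t) Pᶜ) h ≠ 0 :=
      fun h0 => hc2 (by rw [h0, mul_zero])
    have h_g : MvPolynomial.coeff (S16.mres n (S16.sev n k t p) P) g ≠ 0 :=
      fun h0 => he2 (by rw [h0, zero_mul])
    set sm : Fin n → ℕ := fun i => if i ∈ P then S16.sev n k t p i else S16.scv n k t i
      with hsm
    have hm1 : S16.mres n sm P = S16.mres n (S16.sev n k t p) P :=
      Finset.sum_congr rfl (fun i hi => by simp [hsm, hi])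
    have hm2 : S16.mres n sm Pᶜ = S16.mres n (S16.scv n k t) Pᶜ :=
      Finset.sum_congr rfl (fun i hi => by
        have hni : i ∉ P := Finset.mem_compl.mp hi
        simp [hsm, hni])
    have hmix : MvPolynomial.coeff (S16.mres n sm Finset.univ) (S16.Fpoly n k t) ≠ 0 := by
      rw [← hgh', S16.coeff_split n g h P sm hgdeg hhdeg, hm1, hm2]
      exact mul_ne_zero h_g h_h
    have hvan : MvPolynomial.coeff (S16.mres n sm Finset.univ) (S16.Fpoly n k t) = 0 := by
      apply S16.coeff_F_eq_zero n k t hn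
      rw [show (∑ i : Fin n, ((k : ℤ) + 1 - sm i))
          = ∑ i : Fin n, ((k : ℤ) + 1 - (if i ∈ P then S16.sev n k t p i else S16.scv n k t i))
          from rfl,
        S16.sum_mixed hn2 hk ht1 ht2 p P hpP hqP]
      omega
    exact hmix hvan

end
end

section
/- Let m ≥ 3 and let B be an m×(m+1) matrix over a commutative ring. Then det B_{1̂2̂}^{1̂m̂(m+1)̂} · det B_{1̂}^{1̂2̂} · det B^{(m+1)̂} + det B_{1̂2̂}^{1̂2̂(m+1)̂} · det B_{1̂}^{m̂(m+1)̂} · det B^{1̂} = det B_{1̂}^{1̂(m+1)̂} · ( det B_{1̂2̂}^{1̂m̂(m+1)̂} · det B^{2̂} − det B_{1̂2̂}^{2̂m̂(m+1)̂} · det B^{1̂} ). -/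
open Matrix Finset

noncomputable section

section Aux
variable {R : Type*} [CommRing R] {n : ℕ}

lemma myUpdateRow_comm (M : Matrix (Fin n) (Fin n) R) {p q : Fin n} (h : p ≠ q)
    (x y : Fin n → R) :
    (M.updateRow p x).updateRow q y = (M.updateRow q y).updateRow p x := by
  ext i j
  rcases eq_or_ne i p with rfl | h1
  · simp [Matrix.updateRow_apply, h, h.symm]
  · rcases eq_or_ne i q with rfl | h2
    · simp [Matrix.updateRow_apply, h, h1, h.symm]
    · simp [Matrix.updateRow_apply, h1, h2]

lemma det_up_up_swap (M : Matrix (Fin n) (Fin n) R) {p q : Fin n} (hpq : p ≠ q)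
    (x y : Fin n → R) :
    ((M.updateRow p x).updateRow q y).det = -((M.updateRow p y).updateRow q x).det := by
  have h : (M.updateRow p x).updateRow q y =
      ((M.updateRow p y).updateRow q x).submatrix (Equiv.swap p q) id := by
    ext i j
    simp only [Matrix.submatrix_apply, id_eq]
    rcases eq_or_ne i p with rfl | h1
    · simp [Equiv.swap_apply_left, Matrix.updateRow_apply, hpq, hpq.symm]
    · rcases eq_or_ne i q with rfl | h2
      · simp [Equiv.swap_apply_right, Matrix.updateRow_apply, hpq, hpq.symm]
      · simp [Equiv.swap_apply_of_ne_of_ne h1 h2, Matrix.updateRow_apply, h1, h2]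
  rw [h, Matrix.det_permute, Equiv.Perm.sign_swap hpq]
  simp

private def rowDetLin (M : Matrix (Fin n) (Fin n) R) (p : Fin n) : (Fin n → R) →ₗ[R] R where
  toFun x := (M.updateRow p x).det
  map_add' u v := Matrix.det_updateRow_add M p u v
  map_smul' s u := by simpa using Matrix.det_updateRow_smul M p s u

lemma lemA (M : Matrix (Fin n) (Fin n) R) {p q : Fin n} (hpq : p ≠ q) (a b : Fin n → R) :
    M.det * (((M.updateRow p a).updateRow q b).det * M.det
      - ((M.updateRow p a).updateRow q (M p)).det * (M.updateRow p b).det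
      + (M.updateRow p a).det * ((M.updateRow p b).updateRow q (M p)).det) = 0 := by
  set L : (Fin n → R) →ₗ[R] R :=
    M.det • rowDetLin (M.updateRow q b) p
      - (M.updateRow p b).det • rowDetLin (M.updateRow q (M p)) p
      + ((M.updateRow p b).updateRow q (M p)).det • rowDetLin M p with hL
  have hLval : ∀ x, L x = ((M.updateRow p x).updateRow q b).det * M.det
      - ((M.updateRow p x).updateRow q (M p)).det * (M.updateRow p b).det
      + (M.updateRow p x).det * ((M.updateRow p b).updateRow q (M p)).det := by
    intro x
    simp only [hL, LinearMap.add_apply, LinearMap.sub_apply, LinearMap.smul_apply,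
      rowDetLin, LinearMap.coe_mk, AddHom.coe_mk, smul_eq_mul]
    rw [myUpdateRow_comm M hpq.symm b x, myUpdateRow_comm M hpq.symm (M p) x]
    ring
  have hzero : ∀ i, L (M i) = 0 := by
    intro i
    rw [hLval]
    rcases eq_or_ne i p with rfl | hip
    · rw [Matrix.updateRow_eq_self M i]
      have h1 : (M.updateRow q (M i)).det = 0 :=
        Matrix.det_zero_of_row_eq hpq (by simp [Matrix.updateRow_apply, hpq, hpq.symm])
      have h2 : ((M.updateRow i b).updateRow q (M i)).det = -(M.updateRow q b).det := by
        rw [det_up_up_swap M hpq b (M i), Matrix.updateRow_eq_self M i]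
      rw [h1, h2]; ring
    rcases eq_or_ne i q with rfl | hiq
    · have h1 : (M.updateRow p (M i)).det = 0 :=
        Matrix.det_zero_of_row_eq hpq (by simp [Matrix.updateRow_apply, hpq, hpq.symm])
      have h2 : ((M.updateRow p (M i)).updateRow i b).det = -(M.updateRow p b).det := by
        rw [det_up_up_swap M hpq (M i) b]
        have : (M.updateRow p b) i = M i := by simp [Matrix.updateRow_apply, hpq.symm]
        rw [← this, Matrix.updateRow_eq_self]
      have h3 : ((M.updateRow p (M i)).updateRow i (M p)).det = -M.det := by
        rw [det_up_up_swap M hpq (M i) (M p), Matrix.updateRow_eq_self M p,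
          Matrix.updateRow_eq_self M i]
      rw [h1, h2, h3]; ring
    · have h1 : ∀ y, ((M.updateRow p (M i)).updateRow q y).det = 0 := by
        intro y
        refine Matrix.det_zero_of_row_eq (show p ≠ i from fun h => hip h.symm) ?_
        simp [Matrix.updateRow_apply, hip, hiq, hpq]
      have h2 : (M.updateRow p (M i)).det = 0 :=
        Matrix.det_zero_of_row_eq (show p ≠ i from fun h => hip h.symm)
          (by simp [Matrix.updateRow_apply, hip, hiq])
      rw [h1, h1, h2]; ring
  have hdec : M.det • a = ∑ i, (a ᵥ* M.adjugate) i • M i := by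
    have h1 : ∀ (c : Fin n → R), (c ᵥ* M) = ∑ i, c i • M i := by
      intro c; funext j
      simp [Matrix.vecMul, dotProduct, Finset.sum_apply]
    rw [← h1, Matrix.vecMul_vecMul, Matrix.adjugate_mul]
    funext j
    simp [Matrix.vecMul, dotProduct, Matrix.smul_apply, Matrix.one_apply, mul_ite,
      Finset.sum_ite_eq', mul_comm]
  calc M.det * (((M.updateRow p a).updateRow q b).det * M.det
      - ((M.updateRow p a).updateRow q (M p)).det * (M.updateRow p b).det
      + (M.updateRow p a).det * ((M.updateRow p b).updateRow q (M p)).det)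
      = M.det • L a := by rw [hLval]; simp
    _ = L (M.det • a) := (L.map_smul _ _).symm
    _ = L (∑ i, (a ᵥ* M.adjugate) i • M i) := by rw [hdec]
    _ = ∑ i, (a ᵥ* M.adjugate) i • L (M i) := by rw [map_sum]; simp
    _ = 0 := by simp [hzero]

end Aux

section Aux2
variable {R : Type*} [CommRing R] {n : ℕ}

lemma det_collapse (M : Matrix (Fin (n+1)) (Fin (n+1)) R) (r : Fin (n+1))
    (h : ∀ j, M r j = if (j : ℕ) = 0 then 1 else 0) :
    M.det = (-1)^(r : ℕ) * (M.submatrix r.succAbove Fin.succ).det := by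
  rw [Matrix.det_succ_row M r, Fintype.sum_eq_single (0 : Fin (n+1))]
  · rw [h 0]
    simp [Fin.succAbove_zero]
  · intro j hj
    rw [h j]
    have : (j : ℕ) ≠ 0 := fun h => hj (Fin.ext h)
    simp [this]

lemma succAbove_val (r : Fin (n+1)) (t : Fin n) :
    ((r.succAbove t : Fin (n+1)) : ℕ) = if (t : ℕ) < (r : ℕ) then (t : ℕ) else (t : ℕ) + 1 := by
  rw [Fin.succAbove]
  split_ifs with h1 h2 h2
  · rfl
  · exact absurd (by simpa [Fin.lt_def] using h1) h2
  · exact absurd (by simpa [Fin.lt_def] using h2) h1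
  · rfl

lemma rotSwap_val (t : Fin (n+2)) :
    (((finRotate (n+2) * Equiv.swap 0 (Fin.last (n+1))) t : Fin (n+2)) : ℕ) =
      if (t : ℕ) = 0 then 0 else if (t : ℕ) = n+1 then 1 else (t : ℕ) + 1 := by
  rcases eq_or_ne t 0 with rfl | h0
  · simp [Equiv.Perm.mul_apply, Equiv.swap_apply_left, coe_finRotate]
  rcases eq_or_ne t (Fin.last (n+1)) with rfl | hl
  · have : ((Fin.last (n+1) : Fin (n+2)) : ℕ) = n+1 := rfl
    simp [Equiv.Perm.mul_apply, Equiv.swap_apply_right, coe_finRotate, this,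
      (by simp [Fin.ext_iff] : (0 : Fin (n+2)) ≠ Fin.last (n+1))]
  · have h0' : (t : ℕ) ≠ 0 := fun h => h0 (Fin.ext h)
    have hl' : (t : ℕ) ≠ n+1 := by simpa [Fin.ext_iff] using hl
    rw [Equiv.Perm.mul_apply, Equiv.swap_apply_of_ne_of_ne h0 hl, coe_finRotate]
    simp [hl', h0', Fin.ext_iff]

lemma rotSwap_sign :
    (Equiv.Perm.sign (finRotate (n+2) * Equiv.swap 0 (Fin.last (n+1)))) = (-1)^n := by
  rw [_root_.map_mul, sign_finRotate, Equiv.Perm.sign_swap (by simp [Fin.ext_iff])]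
  simp [pow_succ]

end Aux2

section Aux3
variable {R : Type*} [CommRing R] {n : ℕ}

lemma det_rot (A B : Matrix (Fin (n+1)) (Fin (n+1)) R)
    (h : ∀ (t i : Fin (n+1)), A t i =
      if ht : (t : ℕ) = n then B 0 i else B ⟨(t : ℕ)+1, by omega⟩ i) :
    A.det = (-1)^n * B.det := by
  have hA : A = B.submatrix (finRotate (n+1)) id := by
    ext t i
    rw [h]
    simp only [Matrix.submatrix_apply, id_eq]
    by_cases ht : (t : ℕ) = n
    · have h2 : finRotate (n+1) t = 0 := by
        have : t = Fin.last n := by simp [Fin.ext_iff, ht]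
        simp [Fin.ext_iff, coe_finRotate, this]
      rw [dif_pos ht, h2]
    · have h2 : finRotate (n+1) t = ⟨(t : ℕ)+1, by have := t.isLt; omega⟩ := by
        have hne : t ≠ Fin.last n := by simp [Fin.ext_iff, ht]
        apply Fin.ext
        rw [coe_finRotate, if_neg hne]
      rw [dif_neg ht, h2]
  rw [hA, Matrix.det_permute, sign_finRotate]
  push_cast
  ring

lemma det_rotSwap (A B : Matrix (Fin (n+2)) (Fin (n+2)) R)
    (h : ∀ (t i : Fin (n+2)), A t i =
      if (t : ℕ) = 0 then B 0 i else if ht : (t : ℕ) = n+1 then B 1 i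
        else B ⟨(t : ℕ)+1, by omega⟩ i) :
    A.det = (-1)^n * B.det := by
  set σ := finRotate (n+2) * Equiv.swap 0 (Fin.last (n+1)) with hσ
  have hA : A = B.submatrix σ id := by
    ext t i
    rw [h]
    simp only [Matrix.submatrix_apply, id_eq]
    have hv := rotSwap_val (n := n) t
    by_cases h0 : (t : ℕ) = 0
    · have h2 : σ t = 0 := by rw [hσ]; exact Fin.ext (by rw [rotSwap_val]; simp [h0])
      rw [if_pos h0, h2]
    by_cases h1 : (t : ℕ) = n+1
    · have h2 : σ t = 1 := by
        rw [hσ]; exact Fin.ext (by rw [rotSwap_val]; simp [h0, h1])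
      rw [if_neg h0, dif_pos h1, h2]
    · have h2 : σ t = ⟨(t : ℕ)+1, by have := t.isLt; omega⟩ := by
        rw [hσ]; exact Fin.ext (by rw [rotSwap_val]; simp [h0, h1])
      rw [if_neg h0, dif_neg h1, h2]
  rw [hA, Matrix.det_permute, hσ, rotSwap_sign]
  push_cast
  ring

lemma corA [IsDomain R] (M : Matrix (Fin n) (Fin n) R) {p q : Fin n} (hpq : p ≠ q)
    (a b : Fin n → R) (hM : M.det ≠ 0) :
    ((M.updateRow p a).updateRow q b).det * M.det
      = ((M.updateRow p a).updateRow q (M p)).det * (M.updateRow p b).det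
        - (M.updateRow p a).det * ((M.updateRow p b).updateRow q (M p)).det := by
  have h := lemA M hpq a b
  rcases mul_eq_zero.1 h with h' | h'
  · exact absurd h' hM
  · linear_combination h'

end Aux3
section Star
variable {R : Type*} [CommRing R] [IsDomain R]

lemma star1 (k : ℕ) (b : ℕ → ℕ → R)
    (hD1 : (Matrix.of fun t i : Fin (k+3) => b (i : ℕ) ((t : ℕ)+1)).det ≠ 0) :
    (Matrix.of fun t i : Fin (k+2) => b ((i:ℕ)+1) (if (t:ℕ) = 0 then 0 else (t:ℕ)+1)).det
      * (Matrix.of fun t i : Fin (k+3) => b (i:ℕ) ((t:ℕ)+1)).det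
    = (Matrix.of fun t i : Fin (k+2) => b ((i:ℕ)+1) ((t:ℕ)+1)).det
        * (Matrix.of fun t i : Fin (k+3) => b (i:ℕ) (if (t:ℕ) = 0 then 0 else (t:ℕ)+1)).det
      - (Matrix.of fun t i : Fin (k+2) => b ((i:ℕ)+1) ((t:ℕ)+2)).det
        * (Matrix.of fun t i : Fin (k+3) => b (i:ℕ) (t:ℕ)).det := by
  set M1 : Matrix (Fin (k+3)) (Fin (k+3)) R :=
    Matrix.of (fun t i : Fin (k+3) => b (i:ℕ) ((t:ℕ)+1)) with hM1
  set Em : Matrix (Fin (k+2)) (Fin (k+2)) R :=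
    Matrix.of (fun t i : Fin (k+2) => b ((i:ℕ)+1) (if (t:ℕ) = 0 then 0 else (t:ℕ)+1)) with hEm
  set Tm : Matrix (Fin (k+2)) (Fin (k+2)) R :=
    Matrix.of (fun t i : Fin (k+2) => b ((i:ℕ)+1) ((t:ℕ)+1)) with hTm
  set Qm : Matrix (Fin (k+2)) (Fin (k+2)) R :=
    Matrix.of (fun t i : Fin (k+2) => b ((i:ℕ)+1) ((t:ℕ)+2)) with hQm
  set Gm : Matrix (Fin (k+3)) (Fin (k+3)) R :=
    Matrix.of (fun t i : Fin (k+3) => b (i:ℕ) (if (t:ℕ) = 0 then 0 else (t:ℕ)+1)) with hGm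
  set D0m : Matrix (Fin (k+3)) (Fin (k+3)) R :=
    Matrix.of (fun t i : Fin (k+3) => b (i:ℕ) (t:ℕ)) with hD0m
  set e0 : Fin (k+3) → R := (fun i => if (i:ℕ) = 0 then 1 else 0) with he0
  set c0 : Fin (k+3) → R := (fun i => b (i:ℕ) 0) with hc0
  have hpq : (0 : Fin (k+3)) ≠ Fin.last (k+2) := by simp [Fin.ext_iff]
  have rel := corA M1 hpq e0 c0 hD1
  have hrow0 : ∀ (y : Fin (k+3) → R) (j : Fin (k+3)),
      ((M1.updateRow 0 e0).updateRow (Fin.last (k+2)) y) 0 j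
        = if (j : ℕ) = 0 then 1 else 0 := by
    intro y j
    rw [Matrix.updateRow_ne hpq, Matrix.updateRow_self, he0]
  have hTA : ((M1.updateRow 0 e0).updateRow (Fin.last (k+2)) c0).det = (-1)^(k+1) * Em.det := by
    rw [det_collapse _ 0 (hrow0 c0),
      det_rot (n := k+1) _ Em (by
        intro t i
        simp only [Matrix.submatrix_apply, Fin.succAbove_zero, Matrix.updateRow_apply, hM1, hEm,
          hc0, Matrix.of_apply, Fin.ext_iff, Fin.val_succ, Fin.val_last, Fin.val_zero]
        by_cases ht : (t : ℕ) = k+1 <;> simp [ht])]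
    simp
  have hTB : ((M1.updateRow 0 e0).updateRow (Fin.last (k+2)) (M1 0)).det
      = (-1)^(k+1) * Tm.det := by
    rw [det_collapse _ 0 (hrow0 (M1 0)),
      det_rot (n := k+1) _ Tm (by
        intro t i
        simp only [Matrix.submatrix_apply, Fin.succAbove_zero, Matrix.updateRow_apply, hM1, hTm,
          Matrix.of_apply, Fin.ext_iff, Fin.val_succ, Fin.val_last, Fin.val_zero]
        by_cases ht : (t : ℕ) = k+1 <;> simp [ht])]
    simp
  have hTC : (M1.updateRow 0 c0).det = Gm.det := by
    congr 1
    ext t i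
    by_cases ht : (t : ℕ) = 0
    · have ht' : t = 0 := Fin.ext (by simpa using ht)
      simp [Matrix.updateRow_apply, hM1, hGm, hc0, ht', ht]
    · have ht' : t ≠ 0 := fun h => ht (by simp [h])
      simp [Matrix.updateRow_apply, hM1, hGm, hc0, ht', ht]
  have hTDq : (M1.updateRow 0 e0).det = Qm.det := by
    rw [det_collapse _ 0 (by intro j; rw [Matrix.updateRow_self, he0])]
    have hsub : (M1.updateRow 0 e0).submatrix (Fin.succAbove 0) Fin.succ = Qm := by
      ext t i
      simp [Matrix.submatrix_apply, Fin.succAbove_zero, Matrix.updateRow_apply, hM1, hQm,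
        Fin.val_succ, Fin.succ_ne_zero]
    rw [hsub]
    simp
  have hTEx : ((M1.updateRow 0 c0).updateRow (Fin.last (k+2)) (M1 0)).det
      = (-1)^(k+1) * D0m.det := by
    rw [det_rotSwap (n := k+1) _ D0m (by
      intro t i
      simp only [Matrix.updateRow_apply, hM1, hD0m, hc0, Matrix.of_apply, Fin.ext_iff,
        Fin.val_last, Fin.val_zero]
      by_cases h0 : (t : ℕ) = 0
      · simp [h0]
      · by_cases h1 : (t : ℕ) = k+2 <;> simp [h0, h1])]
  rw [hTA, hTB, hTC, hTDq, hTEx] at rel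
  have hee : ((-1:R)^(k+1)) * ((-1:R)^(k+1)) = 1 := by
    rw [← pow_add, show (k+1)+(k+1) = 2*(k+1) by ring, pow_mul]
    norm_num
  linear_combination ((-1:R)^(k+1)) * rel
    + (Tm.det * Gm.det - Qm.det * D0m.det - Em.det * M1.det) * hee

end Star
set_option maxHeartbeats 2000000 in
lemma star2 {R : Type*} [CommRing R] [IsDomain R] (k : ℕ) (b : ℕ → ℕ → R)
    (hT : (Matrix.of fun t i : Fin (k+2) => b ((i:ℕ)+1) ((t:ℕ)+1)).det ≠ 0) :
    (Matrix.of fun t i : Fin (k+1) => b ((i:ℕ)+2) ((t:ℕ)+1)).det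
      * (Matrix.of fun t i : Fin (k+2) => b ((i:ℕ)+1) (if (t:ℕ) = 0 then 0 else (t:ℕ)+1)).det
    = (Matrix.of fun t i : Fin (k+1) => b ((i:ℕ)+2) (if (t:ℕ) = 0 then 0 else (t:ℕ)+1)).det
        * (Matrix.of fun t i : Fin (k+2) => b ((i:ℕ)+1) ((t:ℕ)+1)).det
      + (Matrix.of fun t i : Fin (k+1) => b ((i:ℕ)+2) ((t:ℕ)+2)).det
        * (Matrix.of fun t i : Fin (k+2) => b ((i:ℕ)+1) (t:ℕ)).det := by
  set M2 : Matrix (Fin (k+3)) (Fin (k+3)) R :=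
    Matrix.of (fun t i : Fin (k+3) =>
      if (t:ℕ) = 0 then b (i:ℕ) 1
      else if (t:ℕ) = 1 then (if (i:ℕ) = 0 then 1 else 0)
      else b (i:ℕ) (t:ℕ)) with hM2
  set Pm : Matrix (Fin (k+1)) (Fin (k+1)) R :=
    Matrix.of (fun t i : Fin (k+1) => b ((i:ℕ)+2) ((t:ℕ)+1)) with hPm
  set Pγm : Matrix (Fin (k+1)) (Fin (k+1)) R :=
    Matrix.of (fun t i : Fin (k+1) => b ((i:ℕ)+2) (if (t:ℕ) = 0 then 0 else (t:ℕ)+1)) with hPγm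
  set Rm : Matrix (Fin (k+1)) (Fin (k+1)) R :=
    Matrix.of (fun t i : Fin (k+1) => b ((i:ℕ)+2) ((t:ℕ)+2)) with hRm
  set Em : Matrix (Fin (k+2)) (Fin (k+2)) R :=
    Matrix.of (fun t i : Fin (k+2) => b ((i:ℕ)+1) (if (t:ℕ) = 0 then 0 else (t:ℕ)+1)) with hEm
  set Tm : Matrix (Fin (k+2)) (Fin (k+2)) R :=
    Matrix.of (fun t i : Fin (k+2) => b ((i:ℕ)+1) ((t:ℕ)+1)) with hTm
  set Sm : Matrix (Fin (k+2)) (Fin (k+2)) R :=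
    Matrix.of (fun t i : Fin (k+2) => b ((i:ℕ)+1) (t:ℕ)) with hSm
  set e1 : Fin (k+3) → R := (fun i => if (i:ℕ) = 1 then 1 else 0) with he1
  set c0 : Fin (k+3) → R := (fun i => b (i:ℕ) 0) with hc0
  have hpq : (0 : Fin (k+3)) ≠ Fin.last (k+2) := by simp [Fin.ext_iff]
  have h1l : (1 : Fin (k+3)) ≠ Fin.last (k+2) := by simp [Fin.ext_iff]
  have h10 : (1 : Fin (k+3)) ≠ 0 := by simp [Fin.ext_iff]
  -- row 1 of any (M2.updateRow 0 x).updateRow last y is the unit row e0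
  have hrow1 : ∀ (x y : Fin (k+3) → R) (j : Fin (k+3)),
      ((M2.updateRow 0 x).updateRow (Fin.last (k+2)) y) 1 j
        = if (j : ℕ) = 0 then 1 else 0 := by
    intro x y j
    rw [Matrix.updateRow_ne h1l, Matrix.updateRow_ne h10, hM2]
    simp
  have hrow1' : ∀ (x : Fin (k+3) → R) (j : Fin (k+3)),
      (M2.updateRow 0 x) 1 j = if (j : ℕ) = 0 then 1 else 0 := by
    intro x j
    rw [Matrix.updateRow_ne h10, hM2]
    simp
  -- det M2 = - det Tm
  have hdM2 : M2.det = -Tm.det := by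
    rw [det_collapse M2 1 (by intro j; rw [hM2]; simp)]
    have hsub : M2.submatrix (Fin.succAbove 1) Fin.succ = Tm := by
      ext t i
      simp only [Matrix.submatrix_apply, hM2, hTm, Matrix.of_apply, succAbove_val,
        Fin.val_succ, Fin.val_one]
      split_ifs <;> simp_all <;> omega
    rw [hsub]
    simp
  have hdM2ne : M2.det ≠ 0 := by rw [hdM2]; exact neg_ne_zero.2 hT
  have rel := corA M2 hpq e1 c0 hdM2ne
  have hsab0 : (1 : Fin (k+3)).succAbove 0 = 0 := Fin.ext (by rw [succAbove_val]; simp)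
  have hrow0 : ∀ (y : Fin (k+3) → R) (j : Fin (k+2)),
      (((M2.updateRow 0 e1).updateRow (Fin.last (k+2)) y).submatrix
        ((1 : Fin (k+3)).succAbove) Fin.succ) 0 j = if (j : ℕ) = 0 then 1 else 0 := by
    intro y j
    simp only [Matrix.submatrix_apply, hsab0]
    rw [Matrix.updateRow_ne hpq, Matrix.updateRow_self, he1]
    by_cases hj : (j : ℕ) = 0 <;> simp [hj, Fin.val_succ]
  have hrow0' : ∀ (j : Fin (k+2)),
      ((M2.updateRow 0 e1).submatrix ((1 : Fin (k+3)).succAbove) Fin.succ) 0 j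
        = if (j : ℕ) = 0 then 1 else 0 := by
    intro j
    simp only [Matrix.submatrix_apply, hsab0]
    rw [Matrix.updateRow_self, he1]
    by_cases hj : (j : ℕ) = 0 <;> simp [hj, Fin.val_succ]
  have hTA : ((M2.updateRow 0 e1).updateRow (Fin.last (k+2)) c0).det
      = (-1)^(k+1) * Pγm.det := by
    rw [det_collapse _ 1 (hrow1 e1 c0), det_collapse _ 0 (hrow0 c0),
      det_rot (n := k) _ Pγm (by
        intro t i
        simp only [Matrix.submatrix_apply, Matrix.updateRow_apply, hM2, hPγm, hc0,
          Matrix.of_apply, succAbove_val, Fin.val_succ, Fin.val_zero, Fin.val_one,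
          Fin.val_last, Fin.ext_iff]
        split_ifs <;> simp_all <;> omega)]
    simp only [Fin.val_one, Fin.val_zero, pow_one, pow_zero, one_mul]
    ring
  have hTB : ((M2.updateRow 0 e1).updateRow (Fin.last (k+2)) (M2 0)).det
      = (-1)^(k+1) * Pm.det := by
    rw [det_collapse _ 1 (hrow1 e1 (M2 0)), det_collapse _ 0 (hrow0 (M2 0)),
      det_rot (n := k) _ Pm (by
        intro t i
        simp only [Matrix.submatrix_apply, Matrix.updateRow_apply, hM2, hPm,
          Matrix.of_apply, succAbove_val, Fin.val_succ, Fin.val_zero, Fin.val_one,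
          Fin.val_last, Fin.ext_iff]
        split_ifs <;> simp_all <;> omega)]
    simp only [Fin.val_one, Fin.val_zero, pow_one, pow_zero, one_mul]
    ring
  have hTC : (M2.updateRow 0 c0).det = -Em.det := by
    rw [det_collapse _ 1 (hrow1' c0)]
    have hsub : (M2.updateRow 0 c0).submatrix ((1 : Fin (k+3)).succAbove) Fin.succ = Em := by
      ext t i
      simp only [Matrix.submatrix_apply, Matrix.updateRow_apply, hM2, hEm, hc0,
        Matrix.of_apply, succAbove_val, Fin.val_succ, Fin.val_zero, Fin.val_one,
        Fin.val_last, Fin.ext_iff]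
      split_ifs <;> simp_all <;> omega
    rw [hsub]
    simp
  have hTD : (M2.updateRow 0 e1).det = -Rm.det := by
    rw [det_collapse _ 1 (hrow1' e1), det_collapse _ 0 hrow0']
    have hsub : (((M2.updateRow 0 e1).submatrix ((1 : Fin (k+3)).succAbove)
        Fin.succ).submatrix ((0 : Fin (k+2)).succAbove) Fin.succ) = Rm := by
      ext t i
      simp only [Matrix.submatrix_apply, Matrix.updateRow_apply, hM2, hRm,
        Matrix.of_apply, succAbove_val, Fin.val_succ, Fin.val_zero, Fin.val_one,
        Fin.val_last, Fin.ext_iff]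
      split_ifs <;> simp_all <;> omega
    rw [hsub]
    simp
  have hTE : ((M2.updateRow 0 c0).updateRow (Fin.last (k+2)) (M2 0)).det
      = (-1)^(k+1) * Sm.det := by
    rw [det_collapse _ 1 (hrow1 c0 (M2 0)),
      det_rotSwap (n := k) _ Sm (by
        intro t i
        simp only [Matrix.submatrix_apply, Matrix.updateRow_apply, hM2, hSm, hc0,
          Matrix.of_apply, succAbove_val, Fin.val_succ, Fin.val_zero, Fin.val_one,
          Fin.val_last, Fin.ext_iff]
        split_ifs <;> simp_all <;> omega)]
    simp only [Fin.val_one, pow_one]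
    ring
  rw [hTA, hTB, hTC, hTD, hTE, hdM2] at rel
  have hee : ((-1:R)^(k+1)) * ((-1:R)^(k+1)) = 1 := by
    rw [← pow_add, show (k+1)+(k+1) = 2*(k+1) by ring, pow_mul]
    norm_num
  linear_combination ((-1:R)^(k+1)) * rel
    + (Pγm.det * Tm.det + Rm.det * Sm.det - Pm.det * Em.det) * hee

lemma key_aux {R : Type*} [CommRing R] [IsDomain R] (k : ℕ) (b : ℕ → ℕ → R)
    (hD1 : (Matrix.of fun i j : Fin (k+3) => b (i:ℕ) ((j:ℕ)+1)).det ≠ 0)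
    (hT : (Matrix.of fun i j : Fin (k+2) => b ((i:ℕ)+1) ((j:ℕ)+1)).det ≠ 0) :
    (Matrix.of fun i j : Fin (k+1) => b ((i:ℕ)+2) ((j:ℕ)+1)).det
      * (Matrix.of fun i j : Fin (k+2) => b ((i:ℕ)+1) ((j:ℕ)+2)).det
      * (Matrix.of fun i j : Fin (k+3) => b (i:ℕ) (j:ℕ)).det
    + (Matrix.of fun i j : Fin (k+1) => b ((i:ℕ)+2) ((j:ℕ)+2)).det
      * (Matrix.of fun i j : Fin (k+2) => b ((i:ℕ)+1) (j:ℕ)).det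
      * (Matrix.of fun i j : Fin (k+3) => b (i:ℕ) ((j:ℕ)+1)).det
    = (Matrix.of fun i j : Fin (k+2) => b ((i:ℕ)+1) ((j:ℕ)+1)).det
      * ((Matrix.of fun i j : Fin (k+1) => b ((i:ℕ)+2) ((j:ℕ)+1)).det
          * (Matrix.of fun i j : Fin (k+3) => b (i:ℕ) (if (j:ℕ) = 0 then 0 else (j:ℕ)+1)).det
        - (Matrix.of fun i j : Fin (k+1) => b ((i:ℕ)+2) (if (j:ℕ) = 0 then 0 else (j:ℕ)+1)).det
          * (Matrix.of fun i j : Fin (k+3) => b (i:ℕ) ((j:ℕ)+1)).det) := by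
  have tP : (Matrix.of fun i j : Fin (k+1) => b ((i:ℕ)+2) ((j:ℕ)+1)).det
      = (Matrix.of fun t i : Fin (k+1) => b ((i:ℕ)+2) ((t:ℕ)+1)).det := Matrix.det_transpose _
  have tQ : (Matrix.of fun i j : Fin (k+2) => b ((i:ℕ)+1) ((j:ℕ)+2)).det
      = (Matrix.of fun t i : Fin (k+2) => b ((i:ℕ)+1) ((t:ℕ)+2)).det := Matrix.det_transpose _
  have tD0 : (Matrix.of fun i j : Fin (k+3) => b (i:ℕ) (j:ℕ)).det
      = (Matrix.of fun t i : Fin (k+3) => b (i:ℕ) (t:ℕ)).det := Matrix.det_transpose _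
  have tR : (Matrix.of fun i j : Fin (k+1) => b ((i:ℕ)+2) ((j:ℕ)+2)).det
      = (Matrix.of fun t i : Fin (k+1) => b ((i:ℕ)+2) ((t:ℕ)+2)).det := Matrix.det_transpose _
  have tS : (Matrix.of fun i j : Fin (k+2) => b ((i:ℕ)+1) (j:ℕ)).det
      = (Matrix.of fun t i : Fin (k+2) => b ((i:ℕ)+1) (t:ℕ)).det := Matrix.det_transpose _
  have tD1 : (Matrix.of fun i j : Fin (k+3) => b (i:ℕ) ((j:ℕ)+1)).det
      = (Matrix.of fun t i : Fin (k+3) => b (i:ℕ) ((t:ℕ)+1)).det := Matrix.det_transpose _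
  have tT : (Matrix.of fun i j : Fin (k+2) => b ((i:ℕ)+1) ((j:ℕ)+1)).det
      = (Matrix.of fun t i : Fin (k+2) => b ((i:ℕ)+1) ((t:ℕ)+1)).det := Matrix.det_transpose _
  have tG : (Matrix.of fun i j : Fin (k+3) => b (i:ℕ) (if (j:ℕ) = 0 then 0 else (j:ℕ)+1)).det
      = (Matrix.of fun t i : Fin (k+3) => b (i:ℕ) (if (t:ℕ) = 0 then 0 else (t:ℕ)+1)).det :=
    Matrix.det_transpose _
  have tPγ : (Matrix.of fun i j : Fin (k+1) => b ((i:ℕ)+2) (if (j:ℕ) = 0 then 0 else (j:ℕ)+1)).det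
      = (Matrix.of fun t i : Fin (k+1) => b ((i:ℕ)+2) (if (t:ℕ) = 0 then 0 else (t:ℕ)+1)).det :=
    Matrix.det_transpose _
  rw [tD1] at hD1
  rw [tT] at hT
  have s1 := star1 k b hD1
  have s2 := star2 k b hT
  rw [tP, tQ, tD0, tR, tS, tD1, tT, tG, tPγ]
  linear_combination (Matrix.of fun t i : Fin (k+1) => b ((i:ℕ)+2) ((t:ℕ)+1)).det * s1
    - (Matrix.of fun t i : Fin (k+3) => b (i:ℕ) ((t:ℕ)+1)).det * s2

/-- the three-term identity \eqref{pluckpluck} for an `m × (m+1)` matrix. -/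
theorem statement19 {α : Type*} [CommRing α] (m : ℕ) (hm : 3 ≤ m)
    (B : Matrix (Fin m) (Fin (m + 1)) α) :
    (Matrix.of fun i j : Fin (m - 2) =>
        B ⟨(i : ℕ) + 2, by have := i.isLt; omega⟩
          ⟨(j : ℕ) + 1, by have := j.isLt; omega⟩).det
      * (Matrix.of fun i j : Fin (m - 1) =>
          B ⟨(i : ℕ) + 1, by have := i.isLt; omega⟩
            ⟨(j : ℕ) + 2, by have := j.isLt; omega⟩).det
      * (Matrix.of fun i j : Fin m =>
          B i ⟨(j : ℕ), by have := j.isLt; omega⟩).det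
    + (Matrix.of fun i j : Fin (m - 2) =>
          B ⟨(i : ℕ) + 2, by have := i.isLt; omega⟩
            ⟨(j : ℕ) + 2, by have := j.isLt; omega⟩).det
      * (Matrix.of fun i j : Fin (m - 1) =>
          B ⟨(i : ℕ) + 1, by have := i.isLt; omega⟩
            ⟨(j : ℕ), by have := j.isLt; omega⟩).det
      * (Matrix.of fun i j : Fin m =>
          B i ⟨(j : ℕ) + 1, by have := j.isLt; omega⟩).det
    = (Matrix.of fun i j : Fin (m - 1) =>
          B ⟨(i : ℕ) + 1, by have := i.isLt; omega⟩
            ⟨(j : ℕ) + 1, by have := j.isLt; omega⟩).det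
      * ((Matrix.of fun i j : Fin (m - 2) =>
            B ⟨(i : ℕ) + 2, by have := i.isLt; omega⟩
              ⟨(j : ℕ) + 1, by have := j.isLt; omega⟩).det
          * (Matrix.of fun i j : Fin m =>
              B i (if (j : ℕ) = 0 then ⟨0, by omega⟩
                else ⟨(j : ℕ) + 1, by have := j.isLt; omega⟩)).det
        - (Matrix.of fun i j : Fin (m - 2) =>
            B ⟨(i : ℕ) + 2, by have := i.isLt; omega⟩
              (if (j : ℕ) = 0 then ⟨0, by omega⟩
                else ⟨(j : ℕ) + 1, by have := j.isLt; omega⟩)).det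
          * (Matrix.of fun i j : Fin m =>
              B i ⟨(j : ℕ) + 1, by have := j.isLt; omega⟩).det) := by
  obtain ⟨k, rfl⟩ : ∃ k, m = k + 3 := ⟨m - 3, by omega⟩
  classical
  set bg : ℕ → ℕ → MvPolynomial (ℕ × ℕ) ℤ := fun i j => MvPolynomial.X (i, j) with hbg
  have cert1 : (Matrix.of fun i j : Fin (k+3) => bg (i:ℕ) ((j:ℕ)+1)).det ≠ 0 := by
    intro h
    have h2 := congrArg (MvPolynomial.eval
      (fun p : ℕ × ℕ => if p.2 = p.1 + 1 then (1:ℤ) else 0)) h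
    rw [map_zero, RingHom.map_det] at h2
    have h3 : (MvPolynomial.eval
        (fun p : ℕ × ℕ => if p.2 = p.1 + 1 then (1:ℤ) else 0)).mapMatrix
          (Matrix.of fun i j : Fin (k+3) => bg (i:ℕ) ((j:ℕ)+1)) = 1 := by
      ext i j
      by_cases hij : (i:ℕ) = (j:ℕ)
      · have : i = j := Fin.ext hij
        simp [hbg, Matrix.one_apply, this]
      · have hji : ¬((j:ℕ)+1 = (i:ℕ)+1) := by omega
        have hij' : i ≠ j := fun h' => hij (by rw [h'])
        simp [hbg, Matrix.one_apply, hji, hij', Ne.symm hij]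
    rw [h3, Matrix.det_one] at h2
    exact one_ne_zero h2
  have cert2 : (Matrix.of fun i j : Fin (k+2) => bg ((i:ℕ)+1) ((j:ℕ)+1)).det ≠ 0 := by
    intro h
    have h2 := congrArg (MvPolynomial.eval
      (fun p : ℕ × ℕ => if p.1 = p.2 then (1:ℤ) else 0)) h
    rw [map_zero, RingHom.map_det] at h2
    have h3 : (MvPolynomial.eval
        (fun p : ℕ × ℕ => if p.1 = p.2 then (1:ℤ) else 0)).mapMatrix
          (Matrix.of fun i j : Fin (k+2) => bg ((i:ℕ)+1) ((j:ℕ)+1)) = 1 := by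
      ext i j
      by_cases hij : (i:ℕ) = (j:ℕ)
      · have : i = j := Fin.ext hij
        simp [hbg, Matrix.one_apply, this]
      · have hji : ¬((i:ℕ)+1 = (j:ℕ)+1) := by omega
        have hij' : i ≠ j := fun h' => hij (by rw [h'])
        simp [hbg, Matrix.one_apply, hji, hij', hij]
    rw [h3, Matrix.det_one] at h2
    exact one_ne_zero h2
  have hk := key_aux k bg cert1 cert2
  set φ : MvPolynomial (ℕ × ℕ) ℤ →+* α := MvPolynomial.eval₂Hom (Int.castRingHom α)
      (fun p : ℕ × ℕ => if h : p.1 < k+3 ∧ p.2 < k+4 then B ⟨p.1, h.1⟩ ⟨p.2, h.2⟩ else 0)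
    with hφdef
  have hφ := congrArg φ hk
  simp only [_root_.map_add, _root_.map_mul, _root_.map_sub] at hφ
  have c1 : φ (Matrix.of fun i j : Fin (k+1) => bg ((i:ℕ)+2) ((j:ℕ)+1)).det
      = (Matrix.of fun i j : Fin (k+1) =>
          B ⟨(i:ℕ)+2, by omega⟩ ⟨(j:ℕ)+1, by omega⟩).det := by
    rw [RingHom.map_det]
    congr 1
    ext i j
    simp only [RingHom.mapMatrix_apply, Matrix.map_apply, Matrix.of_apply, hbg, hφdef,
      MvPolynomial.eval₂Hom_X']
    rw [dif_pos (show (i:ℕ)+2 < k+3 ∧ (j:ℕ)+1 < k+4 by omega)]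
  have c2 : φ (Matrix.of fun i j : Fin (k+2) => bg ((i:ℕ)+1) ((j:ℕ)+2)).det
      = (Matrix.of fun i j : Fin (k+2) =>
          B ⟨(i:ℕ)+1, by omega⟩ ⟨(j:ℕ)+2, by omega⟩).det := by
    rw [RingHom.map_det]
    congr 1
    ext i j
    simp only [RingHom.mapMatrix_apply, Matrix.map_apply, Matrix.of_apply, hbg, hφdef,
      MvPolynomial.eval₂Hom_X']
    rw [dif_pos (show (i:ℕ)+1 < k+3 ∧ (j:ℕ)+2 < k+4 by omega)]
  have c3 : φ (Matrix.of fun i j : Fin (k+3) => bg (i:ℕ) (j:ℕ)).det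
      = (Matrix.of fun i j : Fin (k+3) => B i ⟨(j:ℕ), by omega⟩).det := by
    rw [RingHom.map_det]
    congr 1
    ext i j
    simp only [RingHom.mapMatrix_apply, Matrix.map_apply, Matrix.of_apply, hbg, hφdef,
      MvPolynomial.eval₂Hom_X']
    rw [dif_pos (show (i:ℕ) < k+3 ∧ (j:ℕ) < k+4 by omega)]
  have c4 : φ (Matrix.of fun i j : Fin (k+1) => bg ((i:ℕ)+2) ((j:ℕ)+2)).det
      = (Matrix.of fun i j : Fin (k+1) =>
          B ⟨(i:ℕ)+2, by omega⟩ ⟨(j:ℕ)+2, by omega⟩).det := by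
    rw [RingHom.map_det]
    congr 1
    ext i j
    simp only [RingHom.mapMatrix_apply, Matrix.map_apply, Matrix.of_apply, hbg, hφdef,
      MvPolynomial.eval₂Hom_X']
    rw [dif_pos (show (i:ℕ)+2 < k+3 ∧ (j:ℕ)+2 < k+4 by omega)]
  have c5 : φ (Matrix.of fun i j : Fin (k+2) => bg ((i:ℕ)+1) (j:ℕ)).det
      = (Matrix.of fun i j : Fin (k+2) =>
          B ⟨(i:ℕ)+1, by omega⟩ ⟨(j:ℕ), by omega⟩).det := by
    rw [RingHom.map_det]
    congr 1
    ext i j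
    simp only [RingHom.mapMatrix_apply, Matrix.map_apply, Matrix.of_apply, hbg, hφdef,
      MvPolynomial.eval₂Hom_X']
    rw [dif_pos (show (i:ℕ)+1 < k+3 ∧ (j:ℕ) < k+4 by omega)]
  have c6 : φ (Matrix.of fun i j : Fin (k+3) => bg (i:ℕ) ((j:ℕ)+1)).det
      = (Matrix.of fun i j : Fin (k+3) => B i ⟨(j:ℕ)+1, by omega⟩).det := by
    rw [RingHom.map_det]
    congr 1
    ext i j
    simp only [RingHom.mapMatrix_apply, Matrix.map_apply, Matrix.of_apply, hbg, hφdef,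
      MvPolynomial.eval₂Hom_X']
    rw [dif_pos (show (i:ℕ) < k+3 ∧ (j:ℕ)+1 < k+4 by omega)]
  have c7 : φ (Matrix.of fun i j : Fin (k+2) => bg ((i:ℕ)+1) ((j:ℕ)+1)).det
      = (Matrix.of fun i j : Fin (k+2) =>
          B ⟨(i:ℕ)+1, by omega⟩ ⟨(j:ℕ)+1, by omega⟩).det := by
    rw [RingHom.map_det]
    congr 1
    ext i j
    simp only [RingHom.mapMatrix_apply, Matrix.map_apply, Matrix.of_apply, hbg, hφdef,
      MvPolynomial.eval₂Hom_X']
    rw [dif_pos (show (i:ℕ)+1 < k+3 ∧ (j:ℕ)+1 < k+4 by omega)]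
  have c8 : φ (Matrix.of fun i j : Fin (k+3) =>
        bg (i:ℕ) (if (j:ℕ) = 0 then 0 else (j:ℕ)+1)).det
      = (Matrix.of fun i j : Fin (k+3) =>
          B i (if (j:ℕ) = 0 then ⟨0, by omega⟩ else ⟨(j:ℕ)+1, by omega⟩)).det := by
    rw [RingHom.map_det]
    congr 1
    ext i j
    simp only [RingHom.mapMatrix_apply, Matrix.map_apply, Matrix.of_apply, hbg, hφdef,
      MvPolynomial.eval₂Hom_X']
    by_cases hj : (j:ℕ) = 0
    · simp only [if_pos hj]
      rw [dif_pos (show (i:ℕ) < k+3 ∧ (0:ℕ) < k+4 by omega)]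
    · simp only [if_neg hj]
      rw [dif_pos (show (i:ℕ) < k+3 ∧ (j:ℕ)+1 < k+4 by omega)]
  have c9 : φ (Matrix.of fun i j : Fin (k+1) =>
        bg ((i:ℕ)+2) (if (j:ℕ) = 0 then 0 else (j:ℕ)+1)).det
      = (Matrix.of fun i j : Fin (k+1) =>
          B ⟨(i:ℕ)+2, by omega⟩
            (if (j:ℕ) = 0 then ⟨0, by omega⟩ else ⟨(j:ℕ)+1, by omega⟩)).det := by
    rw [RingHom.map_det]
    congr 1
    ext i j
    simp only [RingHom.mapMatrix_apply, Matrix.map_apply, Matrix.of_apply, hbg, hφdef,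
      MvPolynomial.eval₂Hom_X']
    by_cases hj : (j:ℕ) = 0
    · simp only [if_pos hj]
      rw [dif_pos (show (i:ℕ)+2 < k+3 ∧ (0:ℕ) < k+4 by omega)]
    · simp only [if_neg hj]
      rw [dif_pos (show (i:ℕ)+2 < k+3 ∧ (j:ℕ)+1 < k+4 by omega)]
  rw [c1, c2, c3, c4, c5, c6, c7, c8, c9] at hφ
  exact hφ


end
end
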